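/- arXiv:1610.03563 — 7 statements merged into one kernel-verified Lean document; each statement's English description precedes it below -/
import Mathlib

section
/- Let m ∈ ℕ and let a, b, c, b₀, …, b_m be polynomials in ℂ[t₁, t₂]. Suppose the map Φ: ℂ² × ℂ² → ℂ² given by (t₁,t₂)·(x,y) = (a(t₁,t₂)·x + Σ_{i=0}^{m} bᵢ(t₁,t₂)·yⁱ , b(t₁,t₂)·y + c(t₁,t₂)) defines an action of the additive group (ℂ², +) on ℂ². Then: (1) a(t₁,t₂) = b(t₁,t₂) = 1 for all (t₁,t₂) ∈ ℂ²; (2) there exist c₁, c₂ ∈ ℂ such that c(t₁,t₂) = c₁t₁ + c₂t₂ for all (t₁,t₂); (3) if (c₁,c₂) = (0,0), then each bᵢ is a homogeneous linear polynomial in (t₁,t₂); (4) if (c₁,c₂) ≠ (0,0), then there exist λ₀, …, λ_m, μ₀ ∈ ℂ such that bᵢ(t₁,t₂) = gᵢ(c₁t₁ + c₂t₂) for 1 ≤ i ≤ m and b₀(t₁,t₂) = g₀(c₁t₁ + c₂t₂) + μ₀(c̄₂t₁ − c̄₁t₂), where c̄₁, c̄₂ are the complex conjugates of c₁, c₂ and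 gᵢ(r) := Σ_{j=i}^{m} (λⱼ/(j−i+1))·C(j, j−i)·r^{j−i+1}. -/
open Finset

/-- Evaluation of a polynomial in two variables at a point of `ℂ²`. -/
noncomputable def ev (p : MvPolynomial (Fin 2) ℂ) (t : ℂ × ℂ) : ℂ :=
  MvPolynomial.eval ![t.1, t.2] p

/-- `gfun m l i r = ∑_{j=i}^{m} (l j/(j-i+1)) * C(j, j-i) * r^(j-i+1)`. -/
noncomputable def gfun (m : ℕ) (l : ℕ → ℂ) (i : ℕ) (r : ℂ) : ℂ :=
  ∑ j ∈ Finset.Icc i m, (l j / ((j - i + 1 : ℕ) : ℂ)) * ((j.choose (j - i) : ℕ) : ℂ) * r ^ (j - i + 1)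

/-- A (left) action of the additive group `(ℂ², +)` on `ℂ²`. -/
def IsAction (Φ : (ℂ × ℂ) → (ℂ × ℂ) → ℂ × ℂ) : Prop :=
  (∀ z, Φ (0, 0) z = z) ∧ ∀ t t' z, Φ (t + t') z = Φ t (Φ t' z)

/-- The map `(t₁,t₂)·(x,y) = (a(t)·x + Σᵢ bᵢ(t)·yⁱ, b(t)·y + c(t))`. -/
noncomputable def Phi1 (m : ℕ) (A B C : MvPolynomial (Fin 2) ℂ) (Bc : ℕ → MvPolynomial (Fin 2) ℂ)
    (t z : ℂ × ℂ) : ℂ × ℂ :=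
  (ev A t * z.1 + ∑ i ∈ Finset.range (m + 1), ev (Bc i) t * z.2 ^ i,
   ev B t * z.2 + ev C t)

/- ----------------- auxiliary lemmas ----------------- -/

lemma L1 (n : ℕ) (f : ℕ → ℂ) (h : ∀ y : ℂ, ∑ k ∈ Finset.range n, f k * y ^ k = 0) :
    ∀ k < n, f k = 0 := by
  intro k hk
  set P : Polynomial ℂ := ∑ k ∈ Finset.range n, Polynomial.C (f k) * Polynomial.X ^ k with hP
  have hev : ∀ y, P.eval y = ∑ k ∈ Finset.range n, f k * y ^ k := by
    intro y; simp [hP, Polynomial.eval_finset_sum]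
  have hz : P = 0 := Polynomial.funext (fun y => by rw [hev, h y]; simp)
  have hc : P.coeff k = f k := by
    simp [hP, Polynomial.finset_sum_coeff, Polynomial.coeff_C_mul, Polynomial.coeff_X_pow,
      Finset.sum_ite_eq' (Finset.range n), hk]
  rw [hz] at hc; simpa using hc.symm

lemma L2 (Q : Polynomial ℂ) (h : ∀ s : ℂ, Q.eval (2 * s) = 2 * Q.eval s) :
    ∀ s, Q.eval s = Q.eval 1 * s := by
  have hd : Q.natDegree < Q.natDegree + 2 := by omega
  have key : ∀ k, k ≠ 1 → Q.coeff k = 0 := by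
    intro k hk
    rcases lt_or_ge k (Q.natDegree + 2) with hlt | hge
    · have h0 : ∀ y : ℂ, ∑ j ∈ Finset.range (Q.natDegree + 2),
          (Q.coeff j * 2 ^ j - 2 * Q.coeff j) * y ^ j = 0 := by
        intro y
        have e1 := Polynomial.eval_eq_sum_range' hd (2 * y)
        have e2 := Polynomial.eval_eq_sum_range' hd y
        have hy := h y
        rw [e1, e2] at hy
        calc ∑ j ∈ Finset.range (Q.natDegree + 2), (Q.coeff j * 2 ^ j - 2 * Q.coeff j) * y ^ j
            = (∑ j ∈ Finset.range (Q.natDegree + 2), Q.coeff j * (2 * y) ^ j)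
              - 2 * ∑ j ∈ Finset.range (Q.natDegree + 2), Q.coeff j * y ^ j := by
              rw [Finset.mul_sum, ← Finset.sum_sub_distrib]
              exact Finset.sum_congr rfl (fun j _ => by ring)
          _ = 0 := by rw [hy]; ring
      have h3 := L1 _ _ h0 k hlt
      have h2 : (2:ℂ) ^ k ≠ 2 := by
        intro he
        have h4 : (2:ℕ) ^ k = 2 := by exact_mod_cast he
        have : k = 1 := Nat.pow_right_injective le_rfl (by simpa using h4)
        exact hk this
      have h5 : Q.coeff k * ((2:ℂ) ^ k - 2) = 0 := by linear_combination h3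
      rcases mul_eq_zero.mp h5 with h6 | h6
      · exact h6
      · exact absurd (sub_eq_zero.mp h6) h2
    · exact Polynomial.coeff_eq_zero_of_natDegree_lt (by omega)
  have hev : ∀ s, Q.eval s = Q.coeff 1 * s := by
    intro s
    rw [Polynomial.eval_eq_sum_range' hd s]
    rw [Finset.sum_eq_single 1]
    · ring
    · intro j _ hj; rw [key j hj]; ring
    · intro hmem; exact absurd (Finset.mem_range.mpr (by omega)) hmem
  intro s
  rw [hev s, hev 1, mul_one]

lemma L3 (Q : Polynomial ℂ) (h : ∀ s : ℂ, Q.eval s ≠ 0) : ∀ s, Q.eval s = Q.eval 0 := by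
  have hdeg : Q.degree ≤ 0 := by
    by_contra hd
    obtain ⟨z, hz⟩ := Complex.exists_root (lt_of_not_ge hd)
    exact h z hz
  intro s
  rw [Polynomial.eq_C_of_degree_le_zero hdeg]
  simp

noncomputable def lineP (p : MvPolynomial (Fin 2) ℂ) (t : ℂ × ℂ) : Polynomial ℂ :=
  MvPolynomial.aeval ![Polynomial.C t.1 * Polynomial.X, Polynomial.C t.2 * Polynomial.X] p

lemma lineP_eval (p : MvPolynomial (Fin 2) ℂ) (t : ℂ × ℂ) (s : ℂ) :
    (lineP p t).eval s = ev p (s * t.1, s * t.2) := by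
  unfold lineP ev
  rw [MvPolynomial.aeval_def]
  have := MvPolynomial.eval₂_comp_left (Polynomial.evalRingHom s)
    (algebraMap ℂ (Polynomial ℂ)) ![Polynomial.C t.1 * Polynomial.X, Polynomial.C t.2 * Polynomial.X] p
  simp only [Polynomial.coe_evalRingHom] at this
  rw [this]
  rw [MvPolynomial.eval]
  congr 1
  · ext a; simp [Polynomial.algebraMap_eq]
  · ext i; fin_cases i <;> · simp; ring

lemma L5 (f : ℂ × ℂ → ℂ) (Q₁ Q₂ : Polynomial ℂ)
    (h1 : ∀ s, f (s, 0) = Q₁.eval s) (h2 : ∀ s, f (0, s) = Q₂.eval s)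
    (hadd : ∀ t t' : ℂ × ℂ, f (t + t') = f t + f t') :
    ∀ t, f t = f (1, 0) * t.1 + f (0, 1) * t.2 := by
  have k1 : ∀ s : ℂ, f (s, 0) = f (1, 0) * s := by
    intro s
    have hq : ∀ s : ℂ, Q₁.eval (2 * s) = 2 * Q₁.eval s := by
      intro s
      have : ((2 : ℂ) * s, (0:ℂ)) = (s, (0:ℂ)) + (s, 0) := by
        simp [Prod.ext_iff]; ring
      rw [← h1, this, hadd, h1]; ring
    have := L2 Q₁ hq s
    rw [h1, this, ← h1]
  have k2 : ∀ s : ℂ, f (0, s) = f (0, 1) * s := by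
    intro s
    have hq : ∀ s : ℂ, Q₂.eval (2 * s) = 2 * Q₂.eval s := by
      intro s
      have : ((0:ℂ), (2 : ℂ) * s) = ((0:ℂ), s) + (0, s) := by
        simp [Prod.ext_iff]; ring
      rw [← h2, this, hadd, h2]; ring
    have := L2 Q₂ hq s
    rw [h2, this, ← h2]
  intro t
  have ht : t = (t.1, (0:ℂ)) + ((0:ℂ), t.2) := by simp [Prod.ext_iff]
  calc f t = f ((t.1, (0:ℂ)) + ((0:ℂ), t.2)) := by rw [← ht]
    _ = f (1, 0) * t.1 + f (0, 1) * t.2 := by rw [hadd, k1, k2]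

lemma fne (n : ℕ) : ((n.factorial : ℂ)) ≠ 0 :=
  Nat.cast_ne_zero.mpr (Nat.factorial_ne_zero n)

lemma coeff_id' (i p q : ℕ) :
    ((i+p+q).choose i : ℂ) * ((p+q+1).choose p : ℂ) * ((q : ℂ) + 1)
      = ((i+p).choose i : ℂ) * ((i+p+q).choose (i+p) : ℂ) * ((p : ℂ) + (q : ℂ) + 1) := by
  rw [Nat.cast_choose ℂ (by omega : i ≤ i+p+q), Nat.cast_choose ℂ (by omega : p ≤ p+q+1),
    Nat.cast_choose ℂ (by omega : i ≤ i+p), Nat.cast_choose ℂ (by omega : i+p ≤ i+p+q)]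
  have e1 : i+p+q-i = p+q := by omega
  have e2 : p+q+1-p = q+1 := by omega
  have e3 : i+p-i = p := by omega
  have e4 : i+p+q-(i+p) = q := by omega
  rw [e1, e2, e3, e4]
  have h1 : ((p+q+1).factorial : ℂ) = ((p:ℂ)+(q:ℂ)+1) * ((p+q).factorial : ℂ) := by
    rw [Nat.factorial_succ, Nat.cast_mul]; push_cast; ring
  have h2 : ((q+1).factorial : ℂ) = ((q:ℂ)+1) * (q.factorial : ℂ) := by
    rw [Nat.factorial_succ, Nat.cast_mul]; push_cast; ring
  rw [h1, h2]
  have f1 := fne i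
  have f2 := fne p
  have f3 := fne q
  have f4 := fne (p+q)
  have f5 := fne (i+p)
  have n1 : ((q:ℂ)+1) ≠ 0 := by
    have : (((q+1:ℕ)):ℂ) ≠ 0 := Nat.cast_ne_zero.mpr (by omega)
    push_cast at this; exact this
  have n2 : ((p:ℂ)+(q:ℂ)+1) ≠ 0 := by
    have : (((p+q+1:ℕ)):ℂ) ≠ 0 := Nat.cast_ne_zero.mpr (by omega)
    push_cast at this; exact this
  field_simp

lemma coeff_id2' (w u v : ℕ) :
    ((w+1+u).choose w : ℂ) * ((w+1+u+v).choose v : ℂ) * ((u:ℂ)+1)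
      = ((w+1+v).choose w : ℂ) * ((w+1+u+v).choose u : ℂ) * ((v:ℂ)+1) := by
  rw [Nat.cast_choose ℂ (by omega : w ≤ w+1+u), Nat.cast_choose ℂ (by omega : v ≤ w+1+u+v),
    Nat.cast_choose ℂ (by omega : w ≤ w+1+v), Nat.cast_choose ℂ (by omega : u ≤ w+1+u+v)]
  have e1 : w+1+u-w = u+1 := by omega
  have e2 : w+1+u+v-v = w+1+u := by omega
  have e3 : w+1+v-w = v+1 := by omega
  have e4 : w+1+u+v-u = w+1+v := by omega
  rw [e1, e2, e3, e4]
  have h1 : ((u+1).factorial : ℂ) = ((u:ℂ)+1) * (u.factorial : ℂ) := by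
    rw [Nat.factorial_succ, Nat.cast_mul]; push_cast; ring
  have h2 : ((v+1).factorial : ℂ) = ((v:ℂ)+1) * (v.factorial : ℂ) := by
    rw [Nat.factorial_succ, Nat.cast_mul]; push_cast; ring
  rw [h1, h2]
  have f1 := fne w
  have f2 := fne u
  have f3 := fne v
  have f4 := fne (w+1+u)
  have f5 := fne (w+1+v)
  have n1 : ((u:ℂ)+1) ≠ 0 := by
    have : (((u+1:ℕ)):ℂ) ≠ 0 := Nat.cast_ne_zero.mpr (by omega)
    push_cast at this; exact this
  have n2 : ((v:ℂ)+1) ≠ 0 := by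
    have : (((v+1:ℕ)):ℂ) ≠ 0 := Nat.cast_ne_zero.mpr (by omega)
    push_cast at this; exact this
  field_simp

lemma swap1 (a m : ℕ) (F : ℕ → ℕ → ℂ) :
    ∑ j ∈ Finset.Icc a m, ∑ k ∈ Finset.Icc j m, F j k
      = ∑ k ∈ Finset.Icc a m, ∑ j ∈ Finset.Icc a k, F j k := by
  rw [Finset.sum_sigma' (Finset.Icc a m) (fun j => Finset.Icc j m) (fun j k => F j k),
    Finset.sum_sigma' (Finset.Icc a m) (fun k => Finset.Icc a k) (fun k j => F j k)]
  apply Finset.sum_nbij' (fun x => ⟨x.2, x.1⟩) (fun x => ⟨x.2, x.1⟩) <;>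
    simp +contextual [Finset.mem_sigma, Finset.mem_Icc] <;> omega

lemma swap2 (m : ℕ) (F : ℕ → ℕ → ℂ) :
    ∑ i ∈ Finset.range (m+1), ∑ k ∈ Finset.range (i+1), F i k
      = ∑ k ∈ Finset.range (m+1), ∑ i ∈ Finset.Icc k m, F i k := by
  rw [Finset.sum_sigma' (Finset.range (m+1)) (fun i => Finset.range (i+1)) (fun i k => F i k),
    Finset.sum_sigma' (Finset.range (m+1)) (fun k => Finset.Icc k m) (fun k i => F i k)]
  apply Finset.sum_nbij' (fun x => ⟨x.2, x.1⟩) (fun x => ⟨x.2, x.1⟩) <;>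
    simp +contextual [Finset.mem_sigma, Finset.mem_Icc, Finset.mem_range] <;> omega

lemma addpow' (r s : ℂ) (n : ℕ) (hn : 1 ≤ n) :
    (r + s) ^ n = r ^ n + s ^ n + ∑ p ∈ Finset.Ico 1 n, r ^ p * s ^ (n - p) * ((n.choose p : ℕ) : ℂ) := by
  rw [add_pow]
  rw [Finset.sum_range_succ]
  rw [Finset.range_eq_Ico, Finset.sum_eq_sum_Ico_succ_bot (by omega : 0 < n)]
  simp
  ring

lemma KI (m i : ℕ) (l : ℕ → ℂ) (r s : ℂ) :
    gfun m l i (r + s) = gfun m l i r + gfun m l i s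
      + ∑ j ∈ Finset.Icc (i+1) m, ((j.choose i : ℕ) : ℂ) * s ^ (j - i) * gfun m l j r := by
  have key : ∑ k ∈ Finset.Icc i m, (l k / ((k - i + 1 : ℕ) : ℂ)) * ((k.choose (k - i) : ℕ) : ℂ)
        * ((r + s) ^ (k - i + 1) - r ^ (k - i + 1) - s ^ (k - i + 1))
      = ∑ j ∈ Finset.Icc (i+1) m, ((j.choose i : ℕ) : ℂ) * s ^ (j - i) * gfun m l j r := by
    have stepA : ∀ k ∈ Finset.Icc i m,
        (l k / ((k - i + 1 : ℕ) : ℂ)) * ((k.choose (k - i) : ℕ) : ℂ)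
          * ((r + s) ^ (k - i + 1) - r ^ (k - i + 1) - s ^ (k - i + 1))
        = ∑ p ∈ Finset.Ico 1 (k - i + 1),
            (l k / ((k - i + 1 : ℕ) : ℂ)) * ((k.choose (k - i) : ℕ) : ℂ)
              * (r ^ p * s ^ (k - i + 1 - p) * (((k - i + 1).choose p : ℕ) : ℂ)) := by
      intro k _
      rw [← Finset.mul_sum]
      congr 1
      rw [addpow' r s (k - i + 1) (by omega)]
      ring
    rw [Finset.sum_congr rfl stepA]
    rw [← Finset.sum_subset (Finset.Icc_subset_Icc_left (by omega : i ≤ i + 1))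
      (fun k hk hk' => by
        have : k = i := by
          simp only [Finset.mem_Icc] at hk hk' ; omega
        subst this
        simp)]
    have stepC : ∑ j ∈ Finset.Icc (i+1) m, ((j.choose i : ℕ) : ℂ) * s ^ (j - i) * gfun m l j r
        = ∑ k ∈ Finset.Icc (i+1) m, ∑ j ∈ Finset.Icc (i+1) k,
            ((j.choose i : ℕ) : ℂ) * s ^ (j - i)
              * ((l k / ((k - j + 1 : ℕ) : ℂ)) * ((k.choose (k - j) : ℕ) : ℂ) * r ^ (k - j + 1)) := by
      rw [← swap1]
      refine Finset.sum_congr rfl (fun j _ => ?_)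
      rw [gfun, Finset.mul_sum]
    rw [stepC]
    refine Finset.sum_congr rfl (fun k hk => ?_)
    simp only [Finset.mem_Icc] at hk
    refine Finset.sum_nbij' (fun p => k + 1 - p) (fun j => k + 1 - j) ?_ ?_ ?_ ?_ ?_
    · intro p hp; simp only [Finset.mem_Ico] at hp; simp only [Finset.mem_Icc]; omega
    · intro j hj; simp only [Finset.mem_Icc] at hj; simp only [Finset.mem_Ico]; omega
    · intro p hp; simp only [Finset.mem_Ico] at hp
      show k + 1 - (k + 1 - p) = p; omega
    · intro j hj; simp only [Finset.mem_Icc] at hj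
      show k + 1 - (k + 1 - j) = j; omega
    · intro p hp
      simp only [Finset.mem_Ico] at hp
      have h1 : k - (k + 1 - p) + 1 = p := by omega
      have h2 : k - (k + 1 - p) = p - 1 := by omega
      have h3 : k + 1 - p - i = k - i + 1 - p := by omega
      rw [h1, h2, h3]
      have N1 : ((k - i + 1 : ℕ) : ℂ) ≠ 0 := Nat.cast_ne_zero.mpr (by omega)
      have N2 : ((p : ℕ) : ℂ) ≠ 0 := Nat.cast_ne_zero.mpr (by omega)
      have hq : ((k.choose (k - i) : ℕ) : ℂ) * (((k - i + 1).choose p : ℕ) : ℂ) / ((k - i + 1 : ℕ) : ℂ)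
          = (((k + 1 - p).choose i : ℕ) : ℂ) * ((k.choose (p - 1) : ℕ) : ℂ) / ((p : ℕ) : ℂ) := by
        rw [div_eq_div_iff N1 N2]
        have hc := coeff_id' i (k + 1 - p - i) (p - 1)
        have e0 : i + (k + 1 - p - i) + (p - 1) = k := by omega
        have e1 : (k + 1 - p - i) + (p - 1) + 1 = k - i + 1 := by omega
        have e2 : i + (k + 1 - p - i) = k + 1 - p := by omega
        rw [e0, e1, e2] at hc
        have c1 : k.choose (k - i) = k.choose i := Nat.choose_symm (by omega)
        have c2 : (k - i + 1).choose (k + 1 - p - i) = (k - i + 1).choose p := by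
          have h := Nat.choose_symm (by omega : p ≤ k - i + 1)
          rw [show k - i + 1 - p = k + 1 - p - i by omega] at h
          exact h
        have c3 : k.choose (k + 1 - p) = k.choose (p - 1) := by
          have h := Nat.choose_symm (by omega : p - 1 ≤ k)
          rw [show k - (p - 1) = k + 1 - p by omega] at h
          exact h
        rw [c2, c3] at hc
        rw [c1]
        have e3 : ((p - 1 : ℕ) : ℂ) + 1 = ((p : ℕ) : ℂ) := by
          exact_mod_cast congrArg (Nat.cast (R := ℂ)) (by omega : (p - 1) + 1 = p)
        have e4 : ((k + 1 - p - i : ℕ) : ℂ) + ((p - 1 : ℕ) : ℂ) + 1 = ((k - i + 1 : ℕ) : ℂ) := by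
          exact_mod_cast congrArg (Nat.cast (R := ℂ)) e1
        rw [e3, e4] at hc
        linear_combination hc
      linear_combination (l k * r ^ p * s ^ (k - i + 1 - p)) * hq
  have expand : gfun m l i (r + s) - gfun m l i r - gfun m l i s
      = ∑ k ∈ Finset.Icc i m, (l k / ((k - i + 1 : ℕ) : ℂ)) * ((k.choose (k - i) : ℕ) : ℂ)
        * ((r + s) ^ (k - i + 1) - r ^ (k - i + 1) - s ^ (k - i + 1)) := by
    rw [gfun, gfun, gfun, ← Finset.sum_sub_distrib, ← Finset.sum_sub_distrib]
    exact Finset.sum_congr rfl (fun k _ => by ring)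
  linear_combination expand + key

lemma KI2 (m i : ℕ) (hi : 1 ≤ i) (l : ℕ → ℂ) (r s : ℂ) :
    ∑ j ∈ Finset.Icc i m, ((j.choose (i-1) : ℕ) : ℂ) * s ^ (j - i + 1) * gfun m l j r
      = ∑ j ∈ Finset.Icc i m, ((j.choose (i-1) : ℕ) : ℂ) * r ^ (j - i + 1) * gfun m l j s := by
  have lhs : ∑ j ∈ Finset.Icc i m, ((j.choose (i-1) : ℕ) : ℂ) * s ^ (j - i + 1) * gfun m l j r
      = ∑ k ∈ Finset.Icc i m, ∑ j ∈ Finset.Icc i k,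
          ((j.choose (i-1) : ℕ) : ℂ) * s ^ (j - i + 1)
            * ((l k / ((k - j + 1 : ℕ) : ℂ)) * ((k.choose (k - j) : ℕ) : ℂ) * r ^ (k - j + 1)) := by
    rw [← swap1]
    exact Finset.sum_congr rfl (fun j _ => by rw [gfun, Finset.mul_sum])
  have rhs : ∑ j ∈ Finset.Icc i m, ((j.choose (i-1) : ℕ) : ℂ) * r ^ (j - i + 1) * gfun m l j s
      = ∑ k ∈ Finset.Icc i m, ∑ j ∈ Finset.Icc i k,
          ((j.choose (i-1) : ℕ) : ℂ) * r ^ (j - i + 1)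
            * ((l k / ((k - j + 1 : ℕ) : ℂ)) * ((k.choose (k - j) : ℕ) : ℂ) * s ^ (k - j + 1)) := by
    rw [← swap1]
    exact Finset.sum_congr rfl (fun j _ => by rw [gfun, Finset.mul_sum])
  rw [lhs, rhs]
  refine Finset.sum_congr rfl (fun k hk => ?_)
  simp only [Finset.mem_Icc] at hk
  refine Finset.sum_nbij' (fun j => i + k - j) (fun j => i + k - j) ?_ ?_ ?_ ?_ ?_
  · intro j hj; simp only [Finset.mem_Icc] at hj ⊢; omega
  · intro j hj; simp only [Finset.mem_Icc] at hj ⊢; omega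
  · intro j hj; simp only [Finset.mem_Icc] at hj
    show i + k - (i + k - j) = j; omega
  · intro j hj; simp only [Finset.mem_Icc] at hj
    show i + k - (i + k - j) = j; omega
  · intro j hj
    simp only [Finset.mem_Icc] at hj
    have h1 : i + k - j - i + 1 = k - j + 1 := by omega
    have h2 : k - (i + k - j) + 1 = j - i + 1 := by omega
    have h3 : k - (i + k - j) = j - i := by omega
    rw [h1, h2, h3]
    have N1 : ((k - j + 1 : ℕ) : ℂ) ≠ 0 := Nat.cast_ne_zero.mpr (by omega)
    have N2 : ((j - i + 1 : ℕ) : ℂ) ≠ 0 := Nat.cast_ne_zero.mpr (by omega)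
    have hq : ((j.choose (i-1) : ℕ) : ℂ) * ((k.choose (k - j) : ℕ) : ℂ) / ((k - j + 1 : ℕ) : ℂ)
        = (((i + k - j).choose (i-1) : ℕ) : ℂ) * ((k.choose (j - i) : ℕ) : ℂ) / ((j - i + 1 : ℕ) : ℂ) := by
      rw [div_eq_div_iff N1 N2]
      have hc := coeff_id2' (i-1) (j-i) (k-j)
      have e0 : i - 1 + 1 + (j - i) = j := by omega
      have e1 : i - 1 + 1 + (j - i) + (k - j) = k := by omega
      have e2 : i - 1 + 1 + (k - j) = i + k - j := by omega
      rw [e1, e0, e2] at hc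
      have e3 : ((j - i : ℕ) : ℂ) + 1 = ((j - i + 1 : ℕ) : ℂ) := by
        exact_mod_cast congrArg (Nat.cast (R := ℂ)) (rfl : (j - i) + 1 = j - i + 1)
      have e4 : ((k - j : ℕ) : ℂ) + 1 = ((k - j + 1 : ℕ) : ℂ) := by
        exact_mod_cast congrArg (Nat.cast (R := ℂ)) (rfl : (k - j) + 1 = k - j + 1)
      rw [e3, e4] at hc
      linear_combination hc
    linear_combination (l k * r ^ (k - j + 1) * s ^ (j - i + 1)) * hq

noncomputable def gP (m : ℕ) (l : ℕ → ℂ) (i : ℕ) : Polynomial ℂ :=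
  ∑ j ∈ Finset.Icc i m,
    Polynomial.C (l j / ((j - i + 1 : ℕ) : ℂ) * ((j.choose (j - i) : ℕ) : ℂ)) * Polynomial.X ^ (j - i + 1)

lemma gP_eval (m : ℕ) (l : ℕ → ℂ) (i : ℕ) (r : ℂ) : (gP m l i).eval r = gfun m l i r := by
  simp [gP, gfun, Polynomial.eval_finset_sum]

noncomputable def lam (m : ℕ) (β : ℕ → ℂ) (r₀ : ℂ) : ℕ → ℂ := fun j =>
  (β j - ∑ k ∈ (Finset.Icc (j+1) m).attach,
      (lam m β r₀ k.1 / ((k.1 - j + 1 : ℕ) : ℂ)) * ((k.1.choose (k.1 - j) : ℕ) : ℂ) * r₀ ^ (k.1 - j + 1)) / r₀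
termination_by j => m + 1 - j
decreasing_by
  have := k.2
  simp only [Finset.mem_Icc] at this
  omega

lemma lam_spec (m : ℕ) (β : ℕ → ℂ) (r₀ : ℂ) (hr : r₀ ≠ 0) (j : ℕ) (hj : j ≤ m) :
    gfun m (lam m β r₀) j r₀ = β j := by
  rw [gfun]
  rw [show Finset.Icc j m = Finset.Ico j (m+1) by rw [Finset.Ico_add_one_right_eq_Icc]]
  rw [Finset.sum_eq_sum_Ico_succ_bot (by omega : j < m + 1)]
  rw [Finset.Ico_add_one_right_eq_Icc]
  have hj0 : (lam m β r₀ j / ((j - j + 1 : ℕ) : ℂ)) * ((j.choose (j - j) : ℕ) : ℂ) * r₀ ^ (j - j + 1)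
      = lam m β r₀ j * r₀ := by
    simp
  rw [hj0]
  have hunfold : lam m β r₀ j * r₀
      = β j - ∑ k ∈ Finset.Icc (j+1) m,
          (lam m β r₀ k / ((k - j + 1 : ℕ) : ℂ)) * ((k.choose (k - j) : ℕ) : ℂ) * r₀ ^ (k - j + 1) := by
    rw [lam, div_mul_cancel₀ _ hr]
    congr 1
    rw [← Finset.sum_attach (Finset.Icc (j+1) m)
      (fun k => (lam m β r₀ k / ((k - j + 1 : ℕ) : ℂ)) * ((k.choose (k - j) : ℕ) : ℂ) * r₀ ^ (k - j + 1))]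
  rw [hunfold]
  ring

/-- Lemma on `𝔾ₐ²`-actions of special form, (⇒) direction. -/
theorem action_lemma_forward (m : ℕ) (A B C : MvPolynomial (Fin 2) ℂ)
    (Bc : ℕ → MvPolynomial (Fin 2) ℂ)
    (hact : IsAction (Phi1 m A B C Bc)) :
    (∀ t : ℂ × ℂ, ev A t = 1 ∧ ev B t = 1) ∧
    ∃ c₁ c₂ : ℂ,
      (∀ t : ℂ × ℂ, ev C t = c₁ * t.1 + c₂ * t.2) ∧
      ((c₁, c₂) = (0, 0) →
        ∀ i ≤ m, ∃ u v : ℂ, ∀ t : ℂ × ℂ, ev (Bc i) t = u * t.1 + v * t.2) ∧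
      ((c₁, c₂) ≠ (0, 0) →
        ∃ (l : ℕ → ℂ) (μ₀ : ℂ),
          (∀ t : ℂ × ℂ, ev (Bc 0) t =
              gfun m l 0 (c₁ * t.1 + c₂ * t.2) +
                μ₀ * ((starRingEnd ℂ) c₂ * t.1 - (starRingEnd ℂ) c₁ * t.2)) ∧
          (∀ i, 1 ≤ i → i ≤ m →
            ∀ t : ℂ × ℂ, ev (Bc i) t = gfun m l i (c₁ * t.1 + c₂ * t.2))) := by
  obtain ⟨h0, hco⟩ := hact
  have h0' : ∀ x y : ℂ,
      ev A (0,0) * x + ∑ i ∈ Finset.range (m+1), ev (Bc i) (0,0) * y ^ i = x ∧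
      ev B (0,0) * y + ev C (0,0) = y := by
    intro x y
    have := h0 (x, y)
    simpa [Phi1, Prod.ext_iff] using this
  have hA0 : ev A (0,0) = 1 := by linear_combination (h0' 1 0).1 - (h0' 0 0).1
  have hC0 : ev C (0,0) = 0 := by linear_combination (h0' 0 0).2
  have hB0 : ev B (0,0) = 1 := by linear_combination (h0' 0 1).2 - (h0' 0 0).2
  have hc1 : ∀ t t' : ℂ × ℂ, ∀ x y : ℂ,
      ev A (t+t') * x + ∑ i ∈ Finset.range (m+1), ev (Bc i) (t+t') * y ^ i
        = ev A t * (ev A t' * x + ∑ i ∈ Finset.range (m+1), ev (Bc i) t' * y ^ i)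
          + ∑ i ∈ Finset.range (m+1), ev (Bc i) t * (ev B t' * y + ev C t') ^ i := by
    intro t t' x y
    have h := hco t t' (x, y)
    rw [Prod.ext_iff] at h
    simpa [Phi1] using h.1
  have hc2 : ∀ t t' : ℂ × ℂ, ∀ y : ℂ,
      ev B (t+t') * y + ev C (t+t') = ev B t * (ev B t' * y + ev C t') + ev C t := by
    intro t t' y
    have h := hco t t' (0, y)
    rw [Prod.ext_iff] at h
    simpa [Phi1] using h.2
  have hBmul : ∀ t t' : ℂ × ℂ, ev B (t+t') = ev B t * ev B t' := by
    intro t t'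
    linear_combination (hc2 t t' 1) - (hc2 t t' 0)
  have hAmul : ∀ t t' : ℂ × ℂ, ev A (t+t') = ev A t * ev A t' := by
    intro t t'
    linear_combination (hc1 t t' 1 0) - (hc1 t t' 0 0)
  -- A ≡ 1 and B ≡ 1
  have hconst : ∀ (P : MvPolynomial (Fin 2) ℂ),
      (∀ t t' : ℂ × ℂ, ev P (t+t') = ev P t * ev P t') → ev P (0,0) = 1 →
      ∀ t, ev P t = 1 := by
    intro P hmul h00 t
    have hnz : ∀ s : ℂ, (lineP P t).eval s ≠ 0 := by
      intro s hzero
      rw [lineP_eval] at hzero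
      have h1 := hmul (s * t.1, s * t.2) (-(s * t.1), -(s * t.2))
      rw [show ((s * t.1, s * t.2) + (-(s * t.1), -(s * t.2)) : ℂ × ℂ) = (0,0) by
        simp [Prod.ext_iff]] at h1
      rw [h00, hzero] at h1
      simp at h1
    have h2 := L3 (lineP P t) hnz 1
    rw [lineP_eval, lineP_eval] at h2
    simp only [one_mul, zero_mul, Prod.mk.eta] at h2
    exact h2.trans h00
  have hA1 : ∀ t, ev A t = 1 := hconst A hAmul hA0
  have hB1 : ∀ t, ev B t = 1 := hconst B hBmul hB0
  -- C is additive
  have hCadd : ∀ t t' : ℂ × ℂ, ev C (t+t') = ev C t + ev C t' := by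
    intro t t'
    have h := hc2 t t' 0
    have hb := hB1 t
    linear_combination h + ev C t' * hb
  -- C is linear
  set c₁ : ℂ := ev C (1,0) with hc₁def
  set c₂ : ℂ := ev C (0,1) with hc₂def
  have hClin : ∀ t : ℂ × ℂ, ev C t = c₁ * t.1 + c₂ * t.2 := by
    have := L5 (ev C) (lineP C (1,0)) (lineP C (0,1))
      (fun s => by rw [lineP_eval]; norm_num)
      (fun s => by rw [lineP_eval]; norm_num)
      hCadd
    simpa using this
  -- key functional equation for the Bc's
  have hkey : ∀ t t' : ℂ × ℂ, ∀ y : ℂ,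
      ∑ i ∈ Finset.range (m+1), ev (Bc i) (t+t') * y ^ i
        = (∑ i ∈ Finset.range (m+1), ev (Bc i) t' * y ^ i)
          + ∑ i ∈ Finset.range (m+1), ev (Bc i) t * (y + ev C t') ^ i := by
    intro t t' y
    have h := hc1 t t' 0 y
    rw [hA1 t, hB1 t'] at h
    simpa using h
  -- the recurrence
  have hREC : ∀ k, k ≤ m → ∀ t t' : ℂ × ℂ,
      ev (Bc k) (t+t') = ev (Bc k) t'
        + ∑ j ∈ Finset.Icc k m, ev (Bc j) t * ((j.choose k : ℕ) : ℂ) * (ev C t') ^ (j - k) := by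
    intro k hk t t'
    have hy : ∀ y : ℂ, ∑ kk ∈ Finset.range (m+1),
        (ev (Bc kk) (t+t') - ev (Bc kk) t'
          - ∑ j ∈ Finset.Icc kk m, ev (Bc j) t * ((j.choose kk : ℕ) : ℂ) * (ev C t') ^ (j - kk))
          * y ^ kk = 0 := by
      intro y
      have h := hkey t t' y
      have expand : ∑ i ∈ Finset.range (m+1), ev (Bc i) t * (y + ev C t') ^ i
          = ∑ kk ∈ Finset.range (m+1),
              (∑ j ∈ Finset.Icc kk m, ev (Bc j) t * ((j.choose kk : ℕ) : ℂ) * (ev C t') ^ (j - kk))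
                * y ^ kk := by
        calc ∑ i ∈ Finset.range (m+1), ev (Bc i) t * (y + ev C t') ^ i
            = ∑ i ∈ Finset.range (m+1), ∑ kk ∈ Finset.range (i+1),
                ev (Bc i) t * (y ^ kk * (ev C t') ^ (i - kk) * ((i.choose kk : ℕ) : ℂ)) := by
              refine Finset.sum_congr rfl (fun i _ => ?_)
              rw [add_pow, Finset.mul_sum]
          _ = ∑ kk ∈ Finset.range (m+1), ∑ i ∈ Finset.Icc kk m,
                ev (Bc i) t * (y ^ kk * (ev C t') ^ (i - kk) * ((i.choose kk : ℕ) : ℂ)) :=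
              swap2 m _
          _ = ∑ kk ∈ Finset.range (m+1),
              (∑ j ∈ Finset.Icc kk m, ev (Bc j) t * ((j.choose kk : ℕ) : ℂ) * (ev C t') ^ (j - kk))
                * y ^ kk := by
              refine Finset.sum_congr rfl (fun kk _ => ?_)
              rw [Finset.sum_mul]
              exact Finset.sum_congr rfl (fun j _ => by ring)
      rw [expand] at h
      have hsplit : ∑ kk ∈ Finset.range (m+1),
          (ev (Bc kk) (t+t') - ev (Bc kk) t'
            - ∑ j ∈ Finset.Icc kk m, ev (Bc j) t * ((j.choose kk : ℕ) : ℂ) * (ev C t') ^ (j - kk))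
            * y ^ kk
          = (∑ kk ∈ Finset.range (m+1), ev (Bc kk) (t+t') * y ^ kk)
            - (∑ kk ∈ Finset.range (m+1), ev (Bc kk) t' * y ^ kk)
            - ∑ kk ∈ Finset.range (m+1),
                (∑ j ∈ Finset.Icc kk m, ev (Bc j) t * ((j.choose kk : ℕ) : ℂ) * (ev C t') ^ (j - kk))
                  * y ^ kk := by
        rw [← Finset.sum_sub_distrib, ← Finset.sum_sub_distrib]
        exact Finset.sum_congr rfl (fun kk _ => by ring)
      rw [hsplit, h]
      ring
    have := L1 (m+1) _ hy k (by omega)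
    linear_combination this
  -- the symmetry relation
  have hSYM : ∀ i, 1 ≤ i → i ≤ m → ∀ t t' : ℂ × ℂ,
      ∑ j ∈ Finset.Icc i m, ev (Bc j) t * ((j.choose (i-1) : ℕ) : ℂ) * (ev C t') ^ (j - i + 1)
        = ∑ j ∈ Finset.Icc i m, ev (Bc j) t' * ((j.choose (i-1) : ℕ) : ℂ) * (ev C t) ^ (j - i + 1) := by
    intro i hi1 him t t'
    have hsplit : ∀ u u' : ℂ × ℂ,
        ∑ j ∈ Finset.Icc (i-1) m, ev (Bc j) u * ((j.choose (i-1) : ℕ) : ℂ) * (ev C u') ^ (j - (i-1))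
          = ev (Bc (i-1)) u
            + ∑ j ∈ Finset.Icc i m, ev (Bc j) u * ((j.choose (i-1) : ℕ) : ℂ) * (ev C u') ^ (j - i + 1) := by
      intro u u'
      rw [show Finset.Icc (i-1) m = Finset.Ico (i-1) (m+1) by rw [Finset.Ico_add_one_right_eq_Icc]]
      rw [Finset.sum_eq_sum_Ico_succ_bot (by omega : i - 1 < m + 1)]
      congr 1
      · simp
      · rw [show i - 1 + 1 = i by omega, Finset.Ico_add_one_right_eq_Icc]
        refine Finset.sum_congr rfl (fun j hj => ?_)
        simp only [Finset.mem_Icc] at hj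
        rw [show j - (i-1) = j - i + 1 by omega]
    have ha := hREC (i-1) (by omega) t t'
    have hb := hREC (i-1) (by omega) t' t
    rw [add_comm t' t] at hb
    rw [hsplit t t'] at ha
    rw [hsplit t' t] at hb
    linear_combination hb - ha
  refine ⟨fun t => ⟨hA1 t, hB1 t⟩, c₁, c₂, hClin, ?_, ?_⟩
  · -- the case c₁ = c₂ = 0
    intro hz i hi
    have hz1 : c₁ = 0 := by exact congrArg Prod.fst hz
    have hz2 : c₂ = 0 := by exact congrArg Prod.snd hz
    have hCzero : ∀ t : ℂ × ℂ, ev C t = 0 := by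
      intro t; rw [hClin t, hz1, hz2]; ring
    have hadd : ∀ t t' : ℂ × ℂ, ev (Bc i) (t + t') = ev (Bc i) t + ev (Bc i) t' := by
      intro t t'
      have h := hREC i hi t t'
      rw [hCzero t'] at h
      have hsum : ∑ j ∈ Finset.Icc i m, ev (Bc j) t * ((j.choose i : ℕ) : ℂ) * (0:ℂ) ^ (j - i)
          = ev (Bc i) t := by
        rw [show Finset.Icc i m = Finset.Ico i (m+1) by rw [Finset.Ico_add_one_right_eq_Icc]]
        rw [Finset.sum_eq_sum_Ico_succ_bot (by omega : i < m + 1)]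
        have hrest : ∑ j ∈ Finset.Ico (i+1) (m+1), ev (Bc j) t * ((j.choose i : ℕ) : ℂ) * (0:ℂ) ^ (j - i)
            = 0 := by
          refine Finset.sum_eq_zero (fun j hj => ?_)
          simp only [Finset.mem_Ico] at hj
          rw [zero_pow (by omega : j - i ≠ 0)]
          ring
        rw [hrest]
        simp
      rw [hsum] at h
      linear_combination h
    refine ⟨ev (Bc i) (1,0), ev (Bc i) (0,1), ?_⟩
    exact L5 (ev (Bc i)) (lineP (Bc i) (1,0)) (lineP (Bc i) (0,1))
      (fun s => by rw [lineP_eval]; norm_num)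
      (fun s => by rw [lineP_eval]; norm_num)
      hadd
  · -- the case (c₁, c₂) ≠ (0,0)
    intro hnz
    have hc12 : ¬(c₁ = 0 ∧ c₂ = 0) := by
      intro h; exact hnz (by rw [h.1, h.2])
    set t₀ : ℂ × ℂ := ((starRingEnd ℂ) c₁, (starRingEnd ℂ) c₂) with ht₀
    set r₀ : ℂ := ev C t₀ with hr₀def
    have hr₀eq : r₀ = c₁ * (starRingEnd ℂ) c₁ + c₂ * (starRingEnd ℂ) c₂ := by
      rw [hr₀def, hClin t₀]
    have hr₀ : r₀ ≠ 0 := by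
      rw [hr₀eq, Complex.mul_conj, Complex.mul_conj]
      intro h
      have h' : (((Complex.normSq c₁ + Complex.normSq c₂ : ℝ)) : ℂ) = 0 := by push_cast; exact h
      have h'' := Complex.ofReal_eq_zero.mp h'
      have n1 := Complex.normSq_nonneg c₁
      have n2 := Complex.normSq_nonneg c₂
      exact hc12 ⟨Complex.normSq_eq_zero.mp (by linarith), Complex.normSq_eq_zero.mp (by linarith)⟩
    set l : ℕ → ℂ := lam m (fun j => ev (Bc j) t₀) r₀ with hl
    have gcong : ∀ (l1 l2 : ℕ → ℂ) (i : ℕ) (r : ℂ),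
        (∀ j, i ≤ j → j ≤ m → l1 j = l2 j) → gfun m l1 i r = gfun m l2 i r := by
      intro l1 l2 i r hj
      unfold gfun
      refine Finset.sum_congr rfl (fun j hjj => ?_)
      simp only [Finset.mem_Icc] at hjj
      rw [hj j hjj.1 hjj.2]
    have gsplit : ∀ (lf : ℕ → ℂ) (i : ℕ) (r : ℂ), i ≤ m →
        gfun m lf i r = lf i * r + gfun m (Function.update lf i 0) i r := by
      intro lf i r him
      unfold gfun
      rw [show Finset.Icc i m = Finset.Ico i (m+1) by rw [Finset.Ico_add_one_right_eq_Icc]]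
      rw [Finset.sum_eq_sum_Ico_succ_bot (by omega : i < m + 1),
        Finset.sum_eq_sum_Ico_succ_bot (by omega : i < m + 1)]
      have hbot1 : (lf i / ((i - i + 1 : ℕ) : ℂ)) * ((i.choose (i - i) : ℕ) : ℂ) * r ^ (i - i + 1)
          = lf i * r := by simp
      have hbot2 : ((Function.update lf i 0 i) / ((i - i + 1 : ℕ) : ℂ)) * ((i.choose (i - i) : ℕ) : ℂ)
            * r ^ (i - i + 1) = 0 := by
        simp [Function.update_self]
      rw [hbot1, hbot2, zero_add]
      have hrest : ∑ j ∈ Finset.Ico (i+1) (m+1),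
            ((Function.update lf i 0 j) / ((j - i + 1 : ℕ) : ℂ)) * ((j.choose (j - i) : ℕ) : ℂ)
              * r ^ (j - i + 1)
          = ∑ j ∈ Finset.Ico (i+1) (m+1),
            (lf j / ((j - i + 1 : ℕ) : ℂ)) * ((j.choose (j - i) : ℕ) : ℂ) * r ^ (j - i + 1) := by
        refine Finset.sum_congr rfl (fun j hj => ?_)
        simp only [Finset.mem_Ico] at hj
        rw [Function.update_of_ne (by omega : j ≠ i)]
      rw [hrest]
    have STEP : ∀ i, 1 ≤ i → i ≤ m →
        (∀ j, i < j → j ≤ m → ∀ t : ℂ × ℂ, ev (Bc j) t = gfun m l j (ev C t)) →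
        ∀ t : ℂ × ℂ, ev (Bc i) t = gfun m l i (ev C t) := by
      intro i hi1 him IH t
      have hl0eq : ∀ j, i < j → gfun m (Function.update l i 0) j = gfun m l j := by
        intro j hj
        funext r
        exact gcong _ _ j r (fun j' hj' _ => Function.update_of_ne (by omega : j' ≠ i) _ _)
      have hdec : ∀ u u' : ℂ × ℂ,
          (∀ j, i < j → j ≤ m → ev (Bc j) u = gfun m l j (ev C u)) →
          ∑ j ∈ Finset.Icc i m, ev (Bc j) u * ((j.choose (i-1) : ℕ) : ℂ) * (ev C u') ^ (j - i + 1)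
            - ∑ j ∈ Finset.Icc i m, ((j.choose (i-1) : ℕ) : ℂ) * (ev C u') ^ (j - i + 1)
                * gfun m (Function.update l i 0) j (ev C u)
          = (ev (Bc i) u - gfun m (Function.update l i 0) i (ev C u))
              * ((i.choose (i-1) : ℕ) : ℂ) * (ev C u') := by
        intro u u' IHu
        rw [← Finset.sum_sub_distrib]
        rw [Finset.sum_eq_single i]
        · rw [show i - i + 1 = 1 by omega, pow_one]
          ring
        · intro j hj hne
          simp only [Finset.mem_Icc] at hj
          rw [IHu j (by omega) hj.2, hl0eq j (by omega)]
          ring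
        · intro hmem
          exact absurd (Finset.mem_Icc.mpr ⟨le_rfl, him⟩) hmem
      have e1 := hdec t t₀ (fun j hj hj2 => IH j hj hj2 t)
      have e2 := hdec t₀ t (fun j hj hj2 => IH j hj hj2 t₀)
      have e3 := KI2 m i hi1 (Function.update l i 0) (ev C t) (ev C t₀)
      have hs := hSYM i hi1 him t t₀
      -- combine : (b_i t - G(c t)) * Ci * r₀ = (b_i t₀ - G(r₀)) * Ci * (c t)
      have EQ : (ev (Bc i) t - gfun m (Function.update l i 0) i (ev C t))
            * ((i.choose (i-1) : ℕ) : ℂ) * r₀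
          = (ev (Bc i) t₀ - gfun m (Function.update l i 0) i r₀)
            * ((i.choose (i-1) : ℕ) : ℂ) * (ev C t) := by
        rw [hr₀def]
        linear_combination hs - e1 + e2 - e3
      have hCine : ((i.choose (i-1) : ℕ) : ℂ) ≠ 0 :=
        Nat.cast_ne_zero.mpr (Nat.choose_pos (by omega : i - 1 ≤ i)).ne'
      have hX : (ev (Bc i) t - gfun m (Function.update l i 0) i (ev C t)) * r₀
          = (ev (Bc i) t₀ - gfun m (Function.update l i 0) i r₀) * (ev C t) := by
        have h5 : ((ev (Bc i) t - gfun m (Function.update l i 0) i (ev C t)) * r₀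
            - (ev (Bc i) t₀ - gfun m (Function.update l i 0) i r₀) * (ev C t))
            * ((i.choose (i-1) : ℕ) : ℂ) = 0 := by linear_combination EQ
        rcases mul_eq_zero.mp h5 with h6 | h6
        · linear_combination h6
        · exact absurd h6 hCine
      have hli : l i * r₀ = ev (Bc i) t₀ - gfun m (Function.update l i 0) i r₀ := by
        have hspec := lam_spec m (fun j => ev (Bc j) t₀) r₀ hr₀ i him
        have hgs := gsplit l i r₀ him
        rw [← hl] at hspec
        linear_combination hspec - hgs
      rw [gsplit l i (ev C t) him]
      -- from hX and hli : b_i t - G(ct) = l i * (c t)  (multiply hX by r₀⁻¹)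
      have hfin : (ev (Bc i) t - gfun m (Function.update l i 0) i (ev C t)) * r₀
          = (l i * ev C t) * r₀ := by
        rw [hX]
        linear_combination (-(ev C t)) * hli
      have h7 := mul_right_cancel₀ hr₀ hfin
      linear_combination h7
    have MAINF : ∀ i, 1 ≤ i → i ≤ m → ∀ t : ℂ × ℂ, ev (Bc i) t = gfun m l i (ev C t) := by
      have MAIN : ∀ d i, 1 ≤ i → i ≤ m → m - i ≤ d → ∀ t : ℂ × ℂ, ev (Bc i) t = gfun m l i (ev C t) := by
        intro d
        induction d with
        | zero =>
          intro i h1 h2 h3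
          exact STEP i h1 h2 (fun j hj hj2 t => absurd hj2 (by omega))
        | succ d ih =>
          intro i h1 h2 h3
          exact STEP i h1 h2 (fun j hj hj2 => ih j (by omega) hj2 (by omega))
      exact fun i h1 h2 => MAIN m i h1 h2 (by omega)
    -- the case i = 0
    set l0 : ℕ → ℂ := Function.update l 0 0 with hl0def
    have hl0eq0 : ∀ j, 0 < j → gfun m l0 j = gfun m l j := by
      intro j hj
      funext r
      exact gcong _ _ j r (fun j' hj' _ => Function.update_of_ne (by omega : j' ≠ 0) _ _)
    have hsum0 : ∀ t t' : ℂ × ℂ,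
        ∑ j ∈ Finset.Icc 0 m, ev (Bc j) t * ((j.choose 0 : ℕ) : ℂ) * (ev C t') ^ (j - 0)
          = ev (Bc 0) t + ∑ j ∈ Finset.Icc (0+1) m,
              ((j.choose 0 : ℕ) : ℂ) * (ev C t') ^ (j - 0) * gfun m l0 j (ev C t) := by
      intro t t'
      rw [show Finset.Icc 0 m = Finset.Ico 0 (m+1) by rw [Finset.Ico_add_one_right_eq_Icc]]
      rw [Finset.sum_eq_sum_Ico_succ_bot (by omega : 0 < m + 1)]
      congr 1
      · simp
      · rw [show (0:ℕ) + 1 = 1 by rfl, Finset.Ico_add_one_right_eq_Icc]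
        refine Finset.sum_congr rfl (fun j hj => ?_)
        simp only [Finset.mem_Icc] at hj
        rw [MAINF j (by omega) hj.2 t, ← hl0eq0 j (by omega)]
        ring
    have hadd0 : ∀ t t' : ℂ × ℂ,
        ev (Bc 0) (t + t') - gfun m l0 0 (ev C (t + t'))
          = (ev (Bc 0) t - gfun m l0 0 (ev C t)) + (ev (Bc 0) t' - gfun m l0 0 (ev C t')) := by
      intro t t'
      have h := hREC 0 (by omega) t t'
      rw [hsum0 t t'] at h
      have hki := KI m 0 l0 (ev C t) (ev C t')
      rw [hCadd t t']
      linear_combination h - hki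
    set fB : ℂ × ℂ → ℂ := fun t => ev (Bc 0) t - gfun m l0 0 (ev C t) with hfBdef
    have hQ1 : ∀ s : ℂ, fB (s, 0)
        = (lineP (Bc 0) (1,0) - (gP m l0 0).comp (Polynomial.C c₁ * Polynomial.X)).eval s := by
      intro s
      have harg : ev C ((s:ℂ), (0:ℂ)) = c₁ * s := by rw [hClin]; simp
      simp only [hfBdef, Polynomial.eval_sub, Polynomial.eval_comp, Polynomial.eval_mul,
        Polynomial.eval_C, Polynomial.eval_X, lineP_eval, gP_eval, harg]
      norm_num
    have hQ2 : ∀ s : ℂ, fB ((0:ℂ), s)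
        = (lineP (Bc 0) (0,1) - (gP m l0 0).comp (Polynomial.C c₂ * Polynomial.X)).eval s := by
      intro s
      have harg : ev C ((0:ℂ), (s:ℂ)) = c₂ * s := by rw [hClin]; simp
      simp only [hfBdef, Polynomial.eval_sub, Polynomial.eval_comp, Polynomial.eval_mul,
        Polynomial.eval_C, Polynomial.eval_X, lineP_eval, gP_eval, harg]
      norm_num
    have hlin := L5 fB _ _ hQ1 hQ2 (fun t t' => hadd0 t t')
    set u : ℂ := fB (1, 0) with hudef
    set v : ℂ := fB (0, 1) with hvdef
    set lam0 : ℂ := (u * (starRingEnd ℂ) c₁ + v * (starRingEnd ℂ) c₂) / r₀ with hlam0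
    set mu0 : ℂ := (u * c₂ - v * c₁) / r₀ with hmu0
    have hu : lam0 * c₁ + mu0 * (starRingEnd ℂ) c₂ = u := by
      rw [hlam0, hmu0]
      field_simp
      linear_combination (-u) * hr₀eq
    have hv : lam0 * c₂ - mu0 * (starRingEnd ℂ) c₁ = v := by
      rw [hlam0, hmu0]
      field_simp
      linear_combination (-v) * hr₀eq
    refine ⟨Function.update l 0 lam0, mu0, ?_, ?_⟩
    · intro t
      rw [show c₁ * t.1 + c₂ * t.2 = ev C t from (hClin t).symm]
      have hgs := gsplit (Function.update l 0 lam0) 0 (ev C t) (by omega)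
      rw [Function.update_idem, Function.update_self, ← hl0def] at hgs
      have hft := hlin t
      simp only [hfBdef] at hft
      linear_combination hft - hgs - lam0 * (hClin t) - t.1 * hu - t.2 * hv
    · intro i h1i him t
      rw [show c₁ * t.1 + c₂ * t.2 = ev C t from (hClin t).symm]
      rw [MAINF i h1i him t]
      exact gcong l (Function.update l 0 lam0) i (ev C t)
        (fun j hj _ => (Function.update_of_ne (by omega : j ≠ 0) _ _).symm)
end

section
/- Let m ∈ ℕ, c₁, c₂ ∈ ℂ, μ₀, λ₀, …, λ_m ∈ ℂ, and define gᵢ(r) := Σ_{j=i}^{m} (λⱼ/(j−i+1))·C(j, j−i)·r^{j−i+1} for 0 ≤ i ≤ m. Define b₀(t₁,t₂) := g₀(c₁t₁ + c₂t₂) + μ₀(c̄₂t₁ − c̄₁t₂) and bᵢ(t₁,t₂) := gᵢ(c₁t₁ + c₂t₂) for 1 ≤ i ≤ m, where c̄₁, c̄₂ are the complex conjugates of c₁, c₂. Then the map (t₁,t₂)·(x,y) = (x + Σ_{i=0}^{m} bᵢ(t₁,t₂)·yⁱ , y + c₁t₁ + c₂t₂) defines an action of the additive group (ℂ², +) on ℂ².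 -/
open Finset

/-- The coefficient `bᵢ(t₁,t₂) = gᵢ(c₁t₁+c₂t₂) + [i = 0]·μ₀(c̄₂t₁ - c̄₁t₂)`. -/
noncomputable def bCoeff (m : ℕ) (l : ℕ → ℂ) (c₁ c₂ μ₀ : ℂ) (i : ℕ) (t : ℂ × ℂ) : ℂ :=
  gfun m l i (c₁ * t.1 + c₂ * t.2) +
    (if i = 0 then μ₀ * ((starRingEnd ℂ) c₂ * t.1 - (starRingEnd ℂ) c₁ * t.2) else 0)

/-- The map `(t₁,t₂)·(x,y) = (x + Σᵢ bᵢ(t₁,t₂) yⁱ , y + c₁t₁ + c₂t₂)`. -/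
noncomputable def PhiB (m : ℕ) (l : ℕ → ℂ) (c₁ c₂ μ₀ : ℂ) (t z : ℂ × ℂ) : ℂ × ℂ :=
  (z.1 + ∑ i ∈ Finset.range (m + 1), bCoeff m l c₁ c₂ μ₀ i t * z.2 ^ i,
   z.2 + c₁ * t.1 + c₂ * t.2)

lemma gfun_zero (m : ℕ) (l : ℕ → ℂ) (i : ℕ) : gfun m l i 0 = 0 := by
  unfold gfun
  apply Finset.sum_eq_zero
  intro j hj
  simp

lemma gsum_eq (m : ℕ) (l : ℕ → ℂ) (r y : ℂ) :
    ∑ i ∈ range (m+1), gfun m l i r * y^i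
    = ∑ j ∈ range (m+1), l j / ((j:ℂ)+1) * ((y+r)^(j+1) - y^(j+1)) := by
  unfold gfun
  simp_rw [Finset.sum_mul]
  rw [Finset.sum_comm' (s' := fun j => Finset.range (j+1)) (t' := Finset.range (m+1))]
  · apply Finset.sum_congr rfl
    intro j hj
    simp only [Finset.mem_range] at hj
    have hexp : (y + r)^(j+1) - y^(j+1)
        = ∑ i ∈ range (j+1), ((j+1).choose i : ℂ) * y^i * r^(j+1-i) := by
      rw [add_pow]
      rw [Finset.sum_range_succ]
      simp [mul_comm]
      apply Finset.sum_congr rfl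
      intro i hi
      ring
    rw [hexp, Finset.mul_sum]
    apply Finset.sum_congr rfl
    intro i hi
    simp only [Finset.mem_range] at hi
    have hij : i ≤ j := Nat.lt_succ_iff.mp hi
    have h1 : j + 1 - i = j - i + 1 := by omega
    have hsymm : (j+1).choose (j-i+1) = (j+1).choose i := by
      rw [← Nat.choose_symm (by omega : j-i+1 ≤ j+1)]
      congr 1
      omega
    have hch : (j+1) * (j.choose (j-i)) = ((j+1).choose i) * (j-i+1) := by
      simpa [Nat.succ_eq_add_one, hsymm] using Nat.add_one_mul_choose_eq j (j-i)
    have hne1 : (((j-i+1:ℕ)):ℂ) ≠ 0 := Nat.cast_ne_zero.mpr (by omega)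
    have hne2 : ((j:ℂ) + 1) ≠ 0 := by exact_mod_cast Nat.succ_ne_zero j
    have key : ((j.choose (j-i) : ℕ) : ℂ) / (((j-i+1:ℕ)):ℂ) = (((j+1).choose i : ℕ):ℂ) / ((j:ℂ)+1) := by
      rw [div_eq_div_iff hne1 hne2]
      rw [Nat.mul_comm] at hch
      exact_mod_cast hch
    rw [h1]
    calc l j / (((j-i+1:ℕ)):ℂ) * ((j.choose (j-i):ℕ):ℂ) * r ^ (j-i+1) * y ^ i
        = l j * (((j.choose (j-i):ℕ):ℂ) / (((j-i+1:ℕ)):ℂ)) * (r ^ (j-i+1) * y ^ i) := by ring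
      _ = l j / ((j:ℂ)+1) * ((((j+1).choose i:ℕ):ℂ) * y ^ i * r ^ (j-i+1)) := by rw [key]; ring
  · intro i j
    simp only [Finset.mem_range, Finset.mem_Icc]
    omega

lemma gsum_split (m : ℕ) (l : ℕ → ℂ) (a b yy : ℂ) :
    ∑ i ∈ range (m+1), gfun m l i (a + b) * yy^i
    = ∑ i ∈ range (m+1), gfun m l i a * yy^i
      + ∑ i ∈ range (m+1), gfun m l i b * (yy + a)^i := by
  rw [gsum_eq, gsum_eq, gsum_eq, ← Finset.sum_add_distrib]
  apply Finset.sum_congr rfl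
  intro j _
  ring

/-- (⇐) direction of the action lemma: the map above defines an action
of `(ℂ², +)` on `ℂ²`. -/
theorem action_lemma_backward (m : ℕ) (c₁ c₂ μ₀ : ℂ) (l : ℕ → ℂ) :
    IsAction (PhiB m l c₁ c₂ μ₀) := by
  constructor
  · intro z
    simp [PhiB, bCoeff, gfun_zero]
  · intro t t' z
    refine Prod.ext ?_ ?_
    · simp only [PhiB, bCoeff, add_mul, Finset.sum_add_distrib, ite_mul, zero_mul,
        Finset.sum_ite_eq', Finset.mem_range, Nat.zero_lt_succ, if_true, pow_zero, mul_one,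
        Prod.fst_add, Prod.snd_add]
      have harg : c₁ * (t.1 + t'.1) + c₂ * (t.2 + t'.2)
          = (c₁ * t'.1 + c₂ * t'.2) + (c₁ * t.1 + c₂ * t.2) := by ring
      have hb : z.2 + c₁ * t'.1 + c₂ * t'.2 = z.2 + (c₁ * t'.1 + c₂ * t'.2) := by ring
      rw [harg, hb, gsum_split]
      ring
    · simp only [PhiB, Prod.fst_add, Prod.snd_add]
      ring
end

section
/- For every m ∈ ℕ and λ ∈ ℂ, the map τ_λ given by (t₁,t₂)·(x,y) = (x + λ·Σ_{i=0}^{m} (1/(m−i+1))·C(m, m−i)·t₁^{m−i+1}·yⁱ + t₂ , y + t₁) defines a simply transitive action of the additive group (ℂ², +) on ℂ²; that is, it is an action, and for all P, Q ∈ ℂ² there is a unique (t₁,t₂) ∈ ℂ² with (t₁,t₂)·P = Q. -/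
open Finset

/-- The map `τ_λ : (t₁,t₂)·(x,y) =
`(x + λ Σᵢ (1/(m-i+1)) C(m, m-i) t₁^(m-i+1) yⁱ + t₂ , y + t₁)`. -/
noncomputable def tauAct (m : ℕ) (lam : ℂ) (t z : ℂ × ℂ) : ℂ × ℂ :=
  (z.1 + lam * ∑ i ∈ Finset.range (m + 1),
      (1 / ((m - i + 1 : ℕ) : ℂ)) * ((m.choose (m - i) : ℕ) : ℂ) * t.1 ^ (m - i + 1) * z.2 ^ i
    + t.2,
   z.2 + t.1)

lemma key (m : ℕ) (s y : ℂ) :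
    ∑ i ∈ Finset.range (m + 1),
      (1 / ((m - i + 1 : ℕ) : ℂ)) * ((m.choose (m - i) : ℕ) : ℂ) * s ^ (m - i + 1) * y ^ i
    = ((y + s) ^ (m + 1) - y ^ (m + 1)) / ((m + 1 : ℕ) : ℂ) := by
  conv_rhs => rw [add_pow, Finset.sum_range_succ]
  simp only [Nat.sub_self, pow_zero, Nat.choose_self, Nat.cast_one, mul_one, one_mul,
    add_sub_cancel_right, Finset.sum_div]
  apply Finset.sum_congr rfl
  intro i hi
  rw [Finset.mem_range] at hi
  have hi' : i ≤ m := Nat.lt_succ_iff.mp hi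
  have h1 : m + 1 - i = m - i + 1 := by omega
  have h2 : (m + 1) * m.choose (m - i) = (m + 1).choose i * (m - i + 1) := by
    have h3 := Nat.add_one_mul_choose_eq m (m - i)
    have hsymm : (m + 1).choose (m - i + 1) = (m + 1).choose i := by
      rw [← Nat.choose_symm (by omega : i ≤ m + 1)]
      congr 1; omega
    rw [h3, hsymm]
  have hc : ((m + 1 : ℕ) : ℂ) * ((m.choose (m - i) : ℕ) : ℂ)
      = (((m + 1).choose i : ℕ) : ℂ) * ((m - i + 1 : ℕ) : ℂ) := by
    exact_mod_cast congrArg (Nat.cast : ℕ → ℂ) h2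
  have hne1 : ((m - i + 1 : ℕ) : ℂ) ≠ 0 := Nat.cast_ne_zero.mpr (by omega)
  have hne2 : ((m + 1 : ℕ) : ℂ) ≠ 0 := Nat.cast_ne_zero.mpr (by omega)
  rw [h1]
  have hco : (1 / ((m - i + 1 : ℕ) : ℂ)) * ((m.choose (m - i) : ℕ) : ℂ)
      = (((m + 1).choose i : ℕ) : ℂ) / ((m + 1 : ℕ) : ℂ) := by
    rw [one_div, inv_mul_eq_div, div_eq_div_iff hne1 hne2]
    linear_combination hc
  rw [hco]
  ring

/-- for every `m` and `λ`, the map `τ_λ` defines a simply transitive action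
of `(ℂ², +)` on `ℂ²`. -/
theorem tau_simply_transitive (m : ℕ) (lam : ℂ) :
    IsAction (tauAct m lam) ∧ ∀ P Q : ℂ × ℂ, ∃! t : ℂ × ℂ, tauAct m lam t P = Q := by
  have hm : ((m + 1 : ℕ) : ℂ) ≠ 0 := Nat.cast_ne_zero.mpr (by omega)
  constructor
  · constructor
    · intro z
      simp only [tauAct, key]
      apply Prod.ext <;> simp
    · intro t t' z
      simp only [tauAct, key, Prod.fst_add, Prod.snd_add]
      apply Prod.ext
      · simp only
        field_simp
        ring
      · simp only
        ring
  · intro P Q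
    refine ⟨(Q.2 - P.2,
      Q.1 - P.1 - lam * (((P.2 + (Q.2 - P.2)) ^ (m + 1) - P.2 ^ (m + 1)) / ((m + 1 : ℕ) : ℂ))),
      ?_, ?_⟩
    · simp only [tauAct, key]
      apply Prod.ext
      · simp only; ring
      · simp only; ring
    · intro t ht
      simp only [tauAct, key, Prod.ext_iff] at ht
      obtain ⟨h1, h2⟩ := ht
      have ht1 : t.1 = Q.2 - P.2 := by linear_combination h2
      rw [ht1] at h1
      rw [Prod.ext_iff]
      exact ⟨ht1, by linear_combination h1⟩
end

section
/- Let m ∈ ℕ and λ₀, …, λ_m ∈ ℂ, and define gᵢ(r) := Σ_{j=i}^{m} (λⱼ/(j−i+1))·C(j, j−i)·r^{j−i+1} for 0 ≤ i ≤ m. Then for every i with 0 ≤ i ≤ m and all r, r' ∈ ℂ, one has gᵢ(r + r') − gᵢ(r') = Σ_{j=i}^{m} C(j, j−i)·(r')^{j−i}·gⱼ(r). -/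
open Finset

open Nat in


lemma choose_sub_sub (n k b : ℕ) (hb : b ≤ k) (hk : k ≤ n) :
    n.choose k * k.choose b = n.choose b * (n - b).choose (k - b) := by
  have h : 0 < b ! * (k - b)! * (n - k)! :=
    Nat.mul_pos (Nat.mul_pos (Nat.factorial_pos b) (Nat.factorial_pos (k - b))) (Nat.factorial_pos (n - k))
  apply Nat.eq_of_mul_eq_mul_right h
  have e1 : n.choose k * k.choose b * (b ! * (k - b)! * (n - k)!) =
      n.choose k * (k.choose b * b ! * (k - b)!) * (n - k)! := by ring
  have e2 : n.choose b * (n - b).choose (k - b) * (b ! * (k - b)! * (n - k)!) =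
      n.choose b * b ! * ((n - b).choose (k - b) * (k - b)! * (n - k)!) := by ring
  have hnk : n - k = (n - b) - (k - b) := by omega
  rw [e1, Nat.choose_mul_factorial_mul_factorial hb, Nat.choose_mul_factorial_mul_factorial hk,
    e2, hnk, Nat.choose_mul_factorial_mul_factorial (by omega : k - b ≤ n - b)]
  exact (Nat.choose_mul_factorial_mul_factorial (by omega : b ≤ n)).symm

lemma key_nat (i b t : ℕ) :
    (b + 1) * ((i + b + t).choose (b + t) * (b + t + 1).choose (b + 1)) =
    (b + t + 1) * ((i + t).choose t * (i + b + t).choose b) := by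
  have h1 := Nat.add_one_mul_choose_eq (b + t) b
  have h2 := choose_sub_sub (i + b + t) (b + t) b (by omega) (by omega)
  have e1 : i + b + t - b = i + t := by omega
  have e2 : b + t - b = t := by omega
  rw [e1, e2] at h2
  have : (b + 1) * ((i + b + t).choose (b + t) * (b + t + 1).choose (b + 1)) =
      (i + b + t).choose (b + t) * ((b + t + 1).choose (b + 1) * (b + 1)) := by ring
  rw [this, ← h1]
  rw [show Nat.succ (b+t) * (b+t).choose b = (b+t+1) * ((b+t).choose b) from rfl]
  rw [show (i + b + t).choose (b + t) * ((b + t + 1) * (b + t).choose b)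
      = (b+t+1) * ((i + b + t).choose (b + t) * (b + t).choose b) by ring, h2]
  ring



lemma sum_Icc_range (f : ℕ → ℂ) (a b : ℕ) :
    ∑ j ∈ Finset.Icc a b, f j = ∑ t ∈ Finset.range (b + 1 - a), f (a + t) := by
  rw [← Finset.Ico_add_one_right_eq_Icc, Finset.sum_Ico_eq_sum_range]

/-- `gᵢ(r + r') − gᵢ(r') = Σ_{j=i}^{m} C(j, j−i)·(r')^{j−i}·gⱼ(r)`. -/
theorem g_addition_identity (m : ℕ) (l : ℕ → ℂ) (i : ℕ) (him : i ≤ m) (r r' : ℂ) :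
    gfun m l i (r + r') - gfun m l i r' =
      ∑ j ∈ Finset.Icc i m, ((j.choose (j - i) : ℕ) : ℂ) * r' ^ (j - i) * gfun m l j r := by
  simp only [gfun, sum_Icc_range, Nat.add_sub_cancel_left]
  rw [← Finset.sum_sub_distrib]
  have hM : m + 1 - i = (m - i) + 1 := by omega
  rw [hM]
  -- LHS: factor and expand the binomial
  have hL : ∀ a ∈ Finset.range (m - i + 1),
      l (i + a) / ((a + 1 : ℕ) : ℂ) * ((i + a).choose a : ℕ) * (r + r') ^ (a + 1) -
        l (i + a) / ((a + 1 : ℕ) : ℂ) * ((i + a).choose a : ℕ) * r' ^ (a + 1) =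
      ∑ b ∈ Finset.range (a + 1),
        l (i + a) / ((a + 1 : ℕ) : ℂ) * ((i + a).choose a : ℕ) *
          (r ^ (b + 1) * r' ^ (a - b) * ((a + 1).choose (b + 1) : ℕ)) := by
    intro a _
    rw [← Finset.mul_sum, ← mul_sub]
    congr 1
    rw [add_pow, Finset.sum_range_succ']
    simp [Nat.succ_sub_succ]
  rw [Finset.sum_congr rfl hL]
  rw [Finset.sum_comm' (t' := Finset.range (m - i + 1)) (s' := fun b => Finset.Icc b (m - i))
    (fun a b => by simp only [Finset.mem_range, Finset.mem_Icc]; omega)]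
  have hL2 : ∀ b ∈ Finset.range (m - i + 1),
      (∑ a ∈ Finset.Icc b (m - i),
        l (i + a) / ((a + 1 : ℕ) : ℂ) * ((i + a).choose a : ℕ) *
          (r ^ (b + 1) * r' ^ (a - b) * ((a + 1).choose (b + 1) : ℕ))) =
      ∑ t ∈ Finset.range (m - i + 1 - b),
        l (i + (b + t)) / ((b + t + 1 : ℕ) : ℂ) * ((i + (b + t)).choose (b + t) : ℕ) *
          (r ^ (b + 1) * r' ^ t * ((b + t + 1).choose (b + 1) : ℕ)) := by
    intro b _
    rw [sum_Icc_range]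
    exact Finset.sum_congr rfl fun t _ => by rw [Nat.add_sub_cancel_left]
  rw [Finset.sum_congr rfl hL2]
  -- RHS
  have hR : ∀ a ∈ Finset.range (m - i + 1),
      ((i + a).choose a : ℂ) * r' ^ a *
        ∑ b ∈ Finset.range (m + 1 - (i + a)),
          l (i + a + b) / ((b + 1 : ℕ) : ℂ) * ((i + a + b).choose b : ℕ) * r ^ (b + 1) =
      ∑ b ∈ Finset.range (m - i + 1 - a),
        ((i + a).choose a : ℂ) * r' ^ a *
          (l (i + a + b) / ((b + 1 : ℕ) : ℂ) * ((i + a + b).choose b : ℕ) * r ^ (b + 1)) := by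
    intro a ha
    rw [show m + 1 - (i + a) = m - i + 1 - a by omega, Finset.mul_sum]
  rw [Finset.sum_congr rfl hR]
  rw [Finset.sum_comm' (t' := Finset.range (m - i + 1)) (s' := fun b => Finset.range (m - i + 1 - b))
    (fun a b => by simp only [Finset.mem_range]; omega)]
  refine Finset.sum_congr rfl fun b _ => Finset.sum_congr rfl fun t _ => ?_
  -- pointwise
  have hkey : ((t:ℂ) + 1) * (((i + t + b).choose (t + b) : ℂ) * ((t + b + 1).choose (t + 1) : ℂ)) =
      ((t:ℂ) + (b:ℂ) + 1) * (((i + b).choose b : ℂ) * ((i + t + b).choose t : ℂ)) := by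
    exact_mod_cast congrArg (Nat.cast (R := ℂ)) (key_nat i t b)
  rw [show i + (t + b) = i + t + b by ring, show i + b + t = i + t + b by ring]
  have h1 : ((t:ℂ) + (b:ℂ) + 1) ≠ 0 := by
    have := Nat.cast_add_one_ne_zero (R := ℂ) (t + b)
    push_cast at this
    intro h; exact this (by linear_combination h)
  have h2 : ((t:ℂ) + 1) ≠ 0 := Nat.cast_add_one_ne_zero t
  push_cast
  field_simp
  ring_nf
  ring_nf at hkey
  linear_combination (l (i + t + b) * r ^ (t + 1) * r' ^ b) * hkey
end

section
/- Let m ∈ ℕ and let g₀, …, g_m ∈ ℂ[r] be polynomials with gᵢ(0) = 0 for all i, satisfying Σ_{i=0}^{m} (gᵢ(r + r') − gᵢ(r'))·xⁱ = Σ_{i=0}^{m} gᵢ(r)·(x + r')ⁱ for all x, r, r' ∈ ℂ. Then, setting λᵢ := gᵢ'(0) for 0 ≤ i ≤ m (where gᵢ' denotes the derivative), one has gᵢ(r) = Σ_{j=i}^{m} (λⱼ/(j−i+1))·C(j, j−i)·r^{j−i+1} for every 0 ≤ i ≤ m and all r ∈ ℂ. -/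
open Finset

/-- if `g₀, …, g_m ∈ ℂ[r]` vanish at `0` and satisfy
`Σᵢ (gᵢ(r+r') − gᵢ(r'))·xⁱ = Σᵢ gᵢ(r)·(x+r')ⁱ` for all `x, r, r' ∈ ℂ`, then, with
`λᵢ := gᵢ'(0)`, one has `gᵢ(r) = Σ_{j=i}^{m} (λⱼ/(j−i+1))·C(j,j−i)·r^{j−i+1}`. -/
theorem g_functional_equation_solution (m : ℕ) (G : ℕ → Polynomial ℂ)
    (h0 : ∀ i ≤ m, (G i).eval 0 = 0)
    (heq : ∀ x r r' : ℂ,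
      ∑ i ∈ Finset.range (m + 1), ((G i).eval (r + r') - (G i).eval r') * x ^ i =
        ∑ i ∈ Finset.range (m + 1), (G i).eval r * (x + r') ^ i) :
    ∀ i ≤ m, ∀ r : ℂ,
      (G i).eval r = gfun m (fun j => (Polynomial.derivative (G j)).eval 0) i r := by
  set l : ℕ → ℂ := fun j => (Polynomial.derivative (G j)).eval 0 with hl
  have key : ∀ i ≤ m, ∀ r r' : ℂ,
      (G i).eval (r + r') - (G i).eval r' =
        ∑ j ∈ Finset.Icc i m, (G j).eval r * (r' ^ (j - i) * (j.choose i : ℂ)) := by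
    intro i hi r r'
    have hpoly : (∑ k ∈ Finset.range (m+1),
        Polynomial.C ((G k).eval (r+r') - (G k).eval r') * Polynomial.X ^ k : Polynomial ℂ)
        = ∑ k ∈ Finset.range (m+1),
          Polynomial.C ((G k).eval r) * (Polynomial.X + Polynomial.C r') ^ k := by
      apply Polynomial.funext
      intro x
      simp only [Polynomial.eval_finset_sum, Polynomial.eval_mul, Polynomial.eval_pow,
        Polynomial.eval_C, Polynomial.eval_X, Polynomial.eval_add, Polynomial.eval_sub]
      exact heq x r r'
    have hcoeff := congrArg (fun p => Polynomial.coeff p i) hpoly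
    simp only [Polynomial.finset_sum_coeff, Polynomial.coeff_C_mul, Polynomial.coeff_X_pow,
      Polynomial.coeff_X_add_C_pow, mul_ite, mul_one, mul_zero] at hcoeff
    rw [Finset.sum_ite_eq (Finset.range (m+1)) i
      (fun k => (G k).eval (r+r') - (G k).eval r')] at hcoeff
    rw [if_pos (Finset.mem_range.mpr (Nat.lt_succ_of_le hi))] at hcoeff
    rw [hcoeff]
    symm
    apply Finset.sum_subset
    · intro k hk
      simp only [Finset.mem_Icc, Finset.mem_range] at *
      omega
    · intro k hk hk'
      simp only [Finset.mem_Icc, Finset.mem_range] at *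
      have : k < i := by omega
      simp [Nat.choose_eq_zero_of_lt this]
  have keyD : ∀ i ≤ m, ∀ r' : ℂ,
      (Polynomial.derivative (G i)).eval r' =
        ∑ j ∈ Finset.Icc i m, l j * (r' ^ (j - i) * (j.choose i : ℂ)) := by
    intro i hi r'
    have hfun : (fun r : ℂ => (G i).eval (r + r')) =
        (fun r : ℂ => (G i).eval r' +
          ∑ j ∈ Finset.Icc i m, (G j).eval r * (r' ^ (j - i) * (j.choose i : ℂ))) := by
      funext r
      have := key i hi r r'
      linear_combination this
    have h1 : HasDerivAt (fun r : ℂ => (G i).eval (r + r'))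
        ((Polynomial.derivative (G i)).eval (0 + r')) (0 : ℂ) := by
      have := (Polynomial.hasDerivAt (G i) ((0 : ℂ) + r')).comp 0
        ((hasDerivAt_id (0 : ℂ)).add_const r')
      rw [zero_add] at this ⊢; rw [mul_one] at this; exact this
    have h2 : HasDerivAt (fun r : ℂ => (G i).eval r' +
          ∑ j ∈ Finset.Icc i m, (G j).eval r * (r' ^ (j - i) * (j.choose i : ℂ)))
        (∑ j ∈ Finset.Icc i m, l j * (r' ^ (j - i) * (j.choose i : ℂ))) (0 : ℂ) := by
      have h2' : HasDerivAt
          (fun r : ℂ => ∑ j ∈ Finset.Icc i m, (G j).eval r * (r' ^ (j - i) * (j.choose i : ℂ)))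
          (∑ j ∈ Finset.Icc i m, l j * (r' ^ (j - i) * (j.choose i : ℂ))) (0 : ℂ) :=
        HasDerivAt.fun_sum (fun j _ => (Polynomial.hasDerivAt (G j) 0).mul_const _)
      exact h2'.const_add ((G i).eval r')
    rw [hfun] at h1
    have := h1.unique h2
    simpa using this
  intro i hi r
  set P : Polynomial ℂ := ∑ j ∈ Finset.Icc i m,
      Polynomial.C (l j / ((j - i + 1 : ℕ) : ℂ) * ((j.choose (j - i) : ℕ) : ℂ)) *
        Polynomial.X ^ (j - i + 1) with hP
  have hPderiv : Polynomial.derivative P = Polynomial.derivative (G i) := by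
    apply Polynomial.funext
    intro r'
    rw [keyD i hi r']
    simp only [hP, map_sum, Polynomial.derivative_C_mul, Polynomial.derivative_X_pow,
      Polynomial.eval_finset_sum, Polynomial.eval_mul, Polynomial.eval_C, Polynomial.eval_pow,
      Polynomial.eval_X, Polynomial.eval_natCast, Nat.add_sub_cancel]
    apply Finset.sum_congr rfl
    intro j hj
    have hij : i ≤ j := (Finset.mem_Icc.mp hj).1
    have hch : (j.choose (j - i) : ℂ) = (j.choose i : ℂ) := by
      norm_cast
      exact Nat.choose_symm hij
    have hne : ((j - i + 1 : ℕ) : ℂ) ≠ 0 := by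
      exact Nat.cast_ne_zero.mpr (Nat.succ_ne_zero _)
    rw [hch, div_mul_eq_mul_div, div_mul_eq_mul_div, div_eq_iff hne]
    ring
  have hD : Polynomial.derivative (G i - P) = 0 := by
    rw [Polynomial.derivative_sub, hPderiv, sub_self]
  have hdeg : (G i - P).natDegree = 0 :=
    Polynomial.natDegree_eq_zero_of_derivative_eq_zero hD
  have hC := Polynomial.eq_C_of_natDegree_eq_zero hdeg
  have hP0 : P.eval 0 = 0 := by
    simp [hP, Polynomial.eval_finset_sum]
  have hGP : G i = P := by
    have h00 : (G i - P).coeff 0 = 0 := by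
      rw [Polynomial.coeff_zero_eq_eval_zero, Polynomial.eval_sub, h0 i hi, hP0, sub_self]
    have := hC
    rw [h00, map_zero] at this
    linear_combination this
  rw [hGP]
  simp only [hP, gfun, Polynomial.eval_finset_sum, Polynomial.eval_mul, Polynomial.eval_C,
    Polynomial.eval_pow, Polynomial.eval_X]
end

section
/- Let m ∈ ℕ, (c₁, c₂) ∈ ℂ² with (c₁,c₂) ≠ (0,0), μ ∈ ℂ with μ ≠ 0, and λ₀, …, λ_m ∈ ℂ; define gᵢ(r) := Σ_{j=i}^{m} (λⱼ/(j−i+1))·C(j, j−i)·r^{j−i+1} for 0 ≤ i ≤ m, and let σ be the action of (ℂ², +) on ℂ² given by (t₁,t₂)·_σ(x,y) = (x + Σ_{i=0}^{m} gᵢ(c₁t₁ + c₂t₂)·yⁱ + μ(c̄₂t₁ − c̄₁t₂) , y + c₁t₁ + c₂t₂), where c̄₁, c̄₂ are the complex conjugates of c₁, c₂. Then there exists a ℂ-linear automorphism T of ℂ² such that the action σ' defined by σ'(t, z) := σ(T(t), z) is given by (t₁,t₂)·_{σ'}(x,y) = (x + Σ_{i=0}^{m} gᵢ(t₁)·yⁱ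 + t₂ , y + t₁). -/
open Finset

/-- The action `σ : (t₁,t₂)·(x,y) =
`(x + Σᵢ gᵢ(c₁t₁+c₂t₂) yⁱ + μ(c̄₂t₁ − c̄₁t₂) , y + c₁t₁ + c₂t₂)`. -/
noncomputable def sigmaFull (m : ℕ) (l : ℕ → ℂ) (c₁ c₂ μ : ℂ) (t z : ℂ × ℂ) : ℂ × ℂ :=
  (z.1 + ∑ i ∈ Finset.range (m + 1), gfun m l i (c₁ * t.1 + c₂ * t.2) * z.2 ^ i +
      μ * ((starRingEnd ℂ) c₂ * t.1 - (starRingEnd ℂ) c₁ * t.2),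
   z.2 + c₁ * t.1 + c₂ * t.2)

/-- there is a `ℂ`-linear automorphism `T` of `ℂ²` such that the
reparametrized action `σ'(t, z) := σ(T t, z)` is given by
`(t₁,t₂)·(x,y) = (x + Σᵢ gᵢ(t₁) yⁱ + t₂ , y + t₁)`. -/
theorem sigma_normal_form (m : ℕ) (l : ℕ → ℂ) (c₁ c₂ : ℂ) (hc : (c₁, c₂) ≠ (0, 0))
    (μ : ℂ) (hμ : μ ≠ 0) :
    ∃ T : (ℂ × ℂ) ≃ₗ[ℂ] ℂ × ℂ,
      ∀ t z : ℂ × ℂ,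
        sigmaFull m l c₁ c₂ μ (T t) z =
          (z.1 + ∑ i ∈ Finset.range (m + 1), gfun m l i t.1 * z.2 ^ i + t.2, z.2 + t.1) := by
  set n : ℂ := c₁ * (starRingEnd ℂ) c₁ + c₂ * (starRingEnd ℂ) c₂ with hn
  have hn0 : n ≠ 0 := by
    have h1 : c₁ * (starRingEnd ℂ) c₁ = (Complex.normSq c₁ : ℂ) := by
      rw [Complex.mul_conj]
    have h2 : c₂ * (starRingEnd ℂ) c₂ = (Complex.normSq c₂ : ℂ) := by
      rw [Complex.mul_conj]
    rw [hn, h1, h2]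
    intro h
    have : Complex.normSq c₁ + Complex.normSq c₂ = 0 := by exact_mod_cast h
    have h1' : Complex.normSq c₁ = 0 ∧ Complex.normSq c₂ = 0 := by
      constructor <;> nlinarith [Complex.normSq_nonneg c₁, Complex.normSq_nonneg c₂]
    exact hc (by simp [Complex.normSq_eq_zero.mp h1'.1, Complex.normSq_eq_zero.mp h1'.2])
  set s : ℂ := μ * n with hs
  have hs0 : s ≠ 0 := mul_ne_zero hμ hn0
  refine ⟨LinearEquiv.ofLinear
    { toFun := fun t => ((μ * (starRingEnd ℂ) c₁ * t.1 + c₂ * t.2) / s,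
        (μ * (starRingEnd ℂ) c₂ * t.1 - c₁ * t.2) / s)
      map_add' := by intro a b; refine Prod.ext ?_ ?_ <;> simp <;> ring
      map_smul' := by intro a b; refine Prod.ext ?_ ?_ <;> simp <;> ring }
    { toFun := fun u => (c₁ * u.1 + c₂ * u.2,
        μ * ((starRingEnd ℂ) c₂ * u.1 - (starRingEnd ℂ) c₁ * u.2))
      map_add' := by intro a b; refine Prod.ext ?_ ?_ <;> simp <;> ring
      map_smul' := by intro a b; refine Prod.ext ?_ ?_ <;> simp <;> ring }
    ?_ ?_, ?_⟩
  · apply LinearMap.ext; intro u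
    refine Prod.ext ?_ ?_ <;>
      simp only [LinearMap.coe_comp, Function.comp_apply, LinearMap.coe_mk, AddHom.coe_mk,
        LinearMap.id_coe, id_eq] <;> field_simp [hs, hn] <;> ring
  · apply LinearMap.ext; intro u
    refine Prod.ext ?_ ?_ <;>
      simp only [LinearMap.coe_comp, Function.comp_apply, LinearMap.coe_mk, AddHom.coe_mk,
        LinearMap.id_coe, id_eq] <;> field_simp [hs, hn] <;> ring
  · intro t z
    have h1 : c₁ * ((μ * (starRingEnd ℂ) c₁ * t.1 + c₂ * t.2) / s) +
        c₂ * ((μ * (starRingEnd ℂ) c₂ * t.1 - c₁ * t.2) / s) = t.1 := by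
      field_simp [hs, hn]; ring
    have h2 : μ * ((starRingEnd ℂ) c₂ * ((μ * (starRingEnd ℂ) c₁ * t.1 + c₂ * t.2) / s) -
        (starRingEnd ℂ) c₁ * ((μ * (starRingEnd ℂ) c₂ * t.1 - c₁ * t.2) / s)) = t.2 := by
      field_simp [hs, hn]; ring
    simp only [sigmaFull, LinearEquiv.ofLinear_apply, LinearMap.coe_mk, AddHom.coe_mk]
    rw [Prod.ext_iff]
    constructor
    · simp only
      rw [h1, h2]
    · simp only
      rw [add_assoc, h1]
end

section
/- Let (ω₀, …, ω_{n+1}) be a key sequence, with e_k := gcd(|ω₀|, …, |ω_k|) and α_k := e_{k−1}/e_k. Then for each k with 1 ≤ k ≤ n, there exist unique integers β_{k,0}, β_{k,1}, …, β_{k,k−1} with 0 ≤ β_{k,j} < α_j for all 1 ≤ j ≤ k−1 such that α_k·ω_k = β_{k,0}·ω₀ + β_{k,1}·ω₁ + ⋯ + β_{k,k−1}·ω_{k−1}. Moreover, if the key sequence is algebraic, then β_{k,0} ≥ 0 for each k. -/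
open Finset

/-- `eSeq ω k = gcd(|ω₀|, …, |ω_k|)`. -/
def eSeq (ω : ℕ → ℤ) (k : ℕ) : ℕ :=
  (Finset.range (k + 1)).gcd fun i => (ω i).natAbs

/-- `αSeq ω k = e_{k-1} / e_k`. -/
def αSeq (ω : ℕ → ℤ) (k : ℕ) : ℕ :=
  eSeq ω (k - 1) / eSeq ω k

section
variable (ω : ℕ → ℤ)

lemma eSeq_succ (k : ℕ) :
    eSeq ω (k + 1) = Nat.gcd (ω (k+1)).natAbs (eSeq ω k) := by
  rw [eSeq, eSeq, Finset.range_add_one, Finset.gcd_insert]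
  rfl

lemma eSeq_pos (hpos : 1 ≤ ω 0) (k : ℕ) : 0 < eSeq ω k := by
  rcases Nat.eq_zero_or_pos (eSeq ω k) with h | h
  · exfalso
    have h0 := Finset.gcd_eq_zero_iff.mp h 0 (by simp)
    simp only [Int.natAbs_eq_zero] at h0
    omega
  · exact h

lemma eSeq_succ_dvd (k : ℕ) : eSeq ω (k+1) ∣ eSeq ω k := by
  rw [eSeq_succ]; exact Nat.gcd_dvd_right _ _

lemma alpha_mul (k : ℕ) : (αSeq ω (k+1)) * eSeq ω (k+1) = eSeq ω k := by
  have h : eSeq ω (k+1) ∣ eSeq ω k := eSeq_succ_dvd ω k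
  have h2 : αSeq ω (k+1) = eSeq ω k / eSeq ω (k+1) := by simp [αSeq]
  rw [h2, Nat.div_mul_cancel h]

lemma eSeq_dvd (k j : ℕ) (hj : j ≤ k) : (eSeq ω k : ℤ) ∣ ω j := by
  have : eSeq ω k ∣ (ω j).natAbs :=
    Finset.gcd_dvd (by simp only [Finset.mem_range]; omega)
  exact Int.dvd_natAbs.mp (Int.natCast_dvd_natCast.mpr this)

lemma alpha_pos (hpos : 1 ≤ ω 0) (k : ℕ) : 0 < αSeq ω (k+1) := by
  have h := alpha_mul ω k
  have h1 := eSeq_pos ω hpos k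
  by_contra hc
  push_neg at hc
  interval_cases (αSeq ω (k+1)) <;> omega

lemma coprime_step (hpos : 1 ≤ ω 0) (k : ℕ) {m : ℤ}
    (hm : ω (k+1) = (eSeq ω (k+1) : ℤ) * m) :
    IsCoprime ((αSeq ω (k+1) : ℤ)) m := by
  have hepos : 0 < eSeq ω (k+1) := eSeq_pos ω hpos (k+1)
  have hN : (ω (k+1)).natAbs = eSeq ω (k+1) * m.natAbs := by
    simp [hm, Int.natAbs_mul]
  have hg : Nat.gcd (eSeq ω k) ((ω (k+1)).natAbs) = eSeq ω (k+1) := by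
    rw [eSeq_succ, Nat.gcd_comm]
  have hco : Nat.Coprime (eSeq ω k / eSeq ω (k+1)) ((ω (k+1)).natAbs / eSeq ω (k+1)) := by
    rw [← hg]
    exact Nat.coprime_div_gcd_div_gcd (by rw [hg]; exact hepos)
  have hα : αSeq ω (k+1) = eSeq ω k / eSeq ω (k+1) := by simp [αSeq]
  have hmn : (ω (k+1)).natAbs / eSeq ω (k+1) = m.natAbs := by
    rw [hN, Nat.mul_div_cancel_left _ hepos]
  rw [Int.isCoprime_iff_gcd_eq_one, Int.gcd]
  rw [hmn] at hco
  rw [hα]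
  exact hco

end

section
variable (ω : ℕ → ℤ)

lemma exists_rep (hpos : 1 ≤ ω 0) :
    ∀ (k : ℕ) (x : ℤ), (eSeq ω k : ℤ) ∣ x →
    ∃ β : Fin (k+1) → ℤ,
      (∀ j : Fin (k+1), 1 ≤ (j:ℕ) → 0 ≤ β j ∧ β j < (αSeq ω (j:ℕ) : ℤ)) ∧
      x = ∑ j, β j * ω (j:ℕ) := by
  intro k
  induction k with
  | zero =>
    intro x hx
    have hω0 : ω 0 ∣ x := by
      have h0 : (eSeq ω 0 : ℤ) ∣ ω 0 := eSeq_dvd ω 0 0 le_rfl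
      have : eSeq ω 0 = (ω 0).natAbs := by simp [eSeq]
      rw [this] at hx
      exact (Int.natAbs_dvd).mp hx
    refine ⟨fun _ => x / ω 0, ?_, ?_⟩
    · intro j hj
      have := j.isLt; omega
    · simp [Fin.sum_univ_one, Int.ediv_mul_cancel hω0]
  | succ k ih =>
    intro x hx
    have hae : αSeq ω (k+1) * eSeq ω (k+1) = eSeq ω k := alpha_mul ω k
    have hepos : 0 < eSeq ω (k+1) := eSeq_pos ω hpos (k+1)
    have hapos : 0 < αSeq ω (k+1) := alpha_pos ω hpos k
    obtain ⟨m, hm⟩ : ((eSeq ω (k+1) : ℤ)) ∣ ω (k+1) := eSeq_dvd ω (k+1) (k+1) le_rfl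
    obtain ⟨y, hy⟩ := hx
    obtain ⟨u, v, huv⟩ := coprime_step ω hpos k hm
    set a : ℤ := (αSeq ω (k+1) : ℤ) with ha
    set e : ℤ := (eSeq ω (k+1) : ℤ) with he
    have hapos' : (0:ℤ) < a := by rw [ha]; exact_mod_cast hapos
    set r := (y * v) % a with hrdef
    set q := (y * v) / a with hqdef
    have hr0 : 0 ≤ r := Int.emod_nonneg _ (by omega)
    have hra : r < a := Int.emod_lt_of_pos _ hapos'
    have hqr : y * v = a * q + r := (Int.mul_ediv_add_emod _ _).symm
    have hE : (eSeq ω k : ℤ) = a * e := by rw [ha, he]; exact_mod_cast hae.symm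
    have key : x - r * ω (k+1) = (eSeq ω k : ℤ) * (y * u + q * m) := by
      rw [hy, hm, hE]
      linear_combination e * m * hqr - e * y * huv
    obtain ⟨β', hβ'c, hβ's⟩ := ih (x - r * ω (k+1)) ⟨_, key⟩
    refine ⟨Fin.snoc β' r, ?_, ?_⟩
    · intro j
      refine Fin.lastCases ?_ (fun i => ?_) j
      · intro _
        simpa [Fin.snoc_last, Fin.val_last] using ⟨hr0, hra⟩
      · intro hi
        simpa [Fin.snoc_castSucc] using hβ'c i (by simpa using hi)
    · rw [Fin.sum_univ_castSucc]
      simp only [Fin.snoc_castSucc, Fin.snoc_last, Fin.val_last, Fin.coe_castSucc]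
      have := hβ's
      linarith [hβ's]

lemma rep_zero (hpos : 1 ≤ ω 0) :
    ∀ (k : ℕ) (δ : Fin (k+1) → ℤ),
      (∀ j : Fin (k+1), 1 ≤ (j:ℕ) → -(αSeq ω (j:ℕ) : ℤ) < δ j ∧ δ j < (αSeq ω (j:ℕ) : ℤ)) →
      (∑ j, δ j * ω (j:ℕ)) = 0 → ∀ j, δ j = 0 := by
  intro k
  induction k with
  | zero =>
    intro δ hb hs j
    have h0 : δ 0 * ω 0 = 0 := by simpa [Fin.sum_univ_one] using hs
    have : δ 0 = 0 := by
      rcases mul_eq_zero.mp h0 with h | h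
      · exact h
      · omega
    have hj : j = 0 := by omega
    rw [hj]; exact this
  | succ k ih =>
    intro δ hb hs
    rw [Fin.sum_univ_castSucc] at hs
    simp only [Fin.coe_castSucc, Fin.val_last] at hs
    have hS : (eSeq ω k : ℤ) ∣ ∑ i : Fin (k+1), δ i.castSucc * ω (i:ℕ) := by
      refine Finset.dvd_sum fun i _ => Dvd.dvd.mul_left ?_ _
      exact eSeq_dvd ω k i (by omega)
    have hdvd : (eSeq ω k : ℤ) ∣ δ (Fin.last (k+1)) * ω (k+1) := by
      have : δ (Fin.last (k+1)) * ω (k+1) = -∑ i : Fin (k+1), δ i.castSucc * ω (i:ℕ) := by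
        linarith
      rw [this]; exact dvd_neg.mpr hS
    obtain ⟨m, hm⟩ : ((eSeq ω (k+1) : ℤ)) ∣ ω (k+1) := eSeq_dvd ω (k+1) (k+1) le_rfl
    have hE : (eSeq ω k : ℤ) = (αSeq ω (k+1) : ℤ) * (eSeq ω (k+1) : ℤ) := by
      exact_mod_cast (alpha_mul ω k).symm
    have hepos : (0:ℤ) < (eSeq ω (k+1) : ℤ) := by exact_mod_cast eSeq_pos ω hpos (k+1)
    have hdvd2 : (αSeq ω (k+1) : ℤ) ∣ δ (Fin.last (k+1)) * m := by
      have h1 : (αSeq ω (k+1) : ℤ) * (eSeq ω (k+1) : ℤ) ∣ (δ (Fin.last (k+1)) * m) * (eSeq ω (k+1) : ℤ) := by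
        rw [← hE]
        have : (δ (Fin.last (k+1)) * m) * (eSeq ω (k+1) : ℤ) = δ (Fin.last (k+1)) * ω (k+1) := by
          rw [hm]; ring
        rw [this]; exact hdvd
      exact (mul_dvd_mul_iff_right (by omega : (eSeq ω (k+1) : ℤ) ≠ 0)).mp h1
    have hco := coprime_step ω hpos k hm
    have hdvd3 : (αSeq ω (k+1) : ℤ) ∣ δ (Fin.last (k+1)) :=
      hco.dvd_of_dvd_mul_right hdvd2
    have hlast : δ (Fin.last (k+1)) = 0 := by
      have hbl := hb (Fin.last (k+1)) (by simp [Fin.val_last])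
      simp only [Fin.val_last] at hbl
      refine Int.eq_zero_of_abs_lt_dvd hdvd3 ?_
      rw [abs_lt]; exact ⟨hbl.1, hbl.2⟩
    have hrest : ∀ i : Fin (k+1), δ i.castSucc = 0 := by
      refine ih (fun i => δ i.castSucc) ?_ ?_
      · intro j hj
        simpa using hb j.castSucc (by simpa using hj)
      · rw [hlast] at hs; linarith
    intro j
    exact Fin.lastCases hlast hrest j

end

section
variable (ω : ℕ → ℤ)

lemma nat_reduce (hpos : 1 ≤ ω 0) (n : ℕ)
    (hc : ∀ k', 1 ≤ k' → k' ≤ n →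
      ∃ c : Fin k' → ℕ, (αSeq ω k' : ℤ) * ω k' = ∑ j : Fin k', (c j : ℤ) * ω (j : ℕ)) :
    ∀ (k : ℕ), k ≤ n → ∀ c : Fin (k+1) → ℕ,
      ∃ γ : Fin (k+1) → ℕ, (∀ j : Fin (k+1), 1 ≤ (j:ℕ) → γ j < αSeq ω (j:ℕ)) ∧
        (∑ j : Fin (k+1), (c j : ℤ) * ω (j:ℕ)) = ∑ j : Fin (k+1), (γ j : ℤ) * ω (j:ℕ) := by
  intro k
  induction k with
  | zero =>
    intro _ c
    exact ⟨c, fun j hj => by have := j.isLt; omega, rfl⟩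
  | succ k ih =>
    intro hkn c
    have hapos : 0 < αSeq ω (k+1) := alpha_pos ω hpos k
    obtain ⟨d, hd⟩ := hc (k+1) (by omega) hkn
    set a := αSeq ω (k+1) with ha
    set q := c (Fin.last (k+1)) / a with hq
    set r := c (Fin.last (k+1)) % a with hr
    have hra : r < a := Nat.mod_lt _ hapos
    have hqr : c (Fin.last (k+1)) = a * q + r := (Nat.div_add_mod _ _).symm
    obtain ⟨γ', hγ'b, hγ's⟩ := ih (by omega) (fun i => c i.castSucc + q * d i)
    refine ⟨Fin.snoc γ' r, ?_, ?_⟩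
    · intro j
      refine Fin.lastCases ?_ (fun i => ?_) j
      · intro _
        simpa [Fin.snoc_last, Fin.val_last] using hra
      · intro hi
        simpa [Fin.snoc_castSucc] using hγ'b i (by simpa using hi)
    · rw [Fin.sum_univ_castSucc, Fin.sum_univ_castSucc (f := fun j => ((Fin.snoc γ' r : Fin (k+2) → ℕ) j : ℤ) * ω (j:ℕ))]
      simp only [Fin.snoc_castSucc, Fin.snoc_last, Fin.val_last, Fin.coe_castSucc]
      rw [← hγ's]
      have hsplit : ∑ i : Fin (k+1), ((c i.castSucc + q * d i : ℕ) : ℤ) * ω (i:ℕ)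
          = ∑ i : Fin (k+1), (c i.castSucc : ℤ) * ω (i:ℕ)
            + (q:ℤ) * ∑ i : Fin (k+1), (d i : ℤ) * ω (i:ℕ) := by
        rw [Finset.mul_sum, ← Finset.sum_add_distrib]
        refine Finset.sum_congr rfl fun i _ => by push_cast; ring
      rw [hsplit, ← hd]
      have hcl : ((c (Fin.last (k+1)) : ℤ)) = (a:ℤ) * q + r := by exact_mod_cast hqr
      rw [hcl]
      ring

end


/-- for a key sequence `(ω₀, …, ω_{n+1})` and each `1 ≤ k ≤ n` there exist
unique integers `β_{k,0}, …, β_{k,k-1}` with `0 ≤ β_{k,j} < α_j` for `1 ≤ j ≤ k-1` such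
that `α_k·ω_k = Σ_j β_{k,j}·ω_j`; if moreover the key sequence is algebraic, then
`β_{k,0} ≥ 0`. -/
theorem key_sequence_unique_representation (n : ℕ) (ω : ℕ → ℤ)
    (hpos : 1 ≤ ω 0)
    (hone : eSeq ω (n + 1) = 1)
    (hlt : ∀ k, 1 ≤ k → k ≤ n → ω (k + 1) < (αSeq ω k : ℤ) * ω k)
    (k : ℕ) (hk1 : 1 ≤ k) (hkn : k ≤ n) :
    (∃! β : Fin k → ℤ,
        (∀ j : Fin k, 1 ≤ (j : ℕ) → 0 ≤ β j ∧ β j < (αSeq ω (j : ℕ) : ℤ)) ∧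
        (αSeq ω k : ℤ) * ω k = ∑ j : Fin k, β j * ω (j : ℕ)) ∧
    ((∀ k', 1 ≤ k' → k' ≤ n →
        ∃ c : Fin k' → ℕ, (αSeq ω k' : ℤ) * ω k' = ∑ j : Fin k', (c j : ℤ) * ω (j : ℕ)) →
      ∀ β : Fin k → ℤ,
        ((∀ j : Fin k, 1 ≤ (j : ℕ) → 0 ≤ β j ∧ β j < (αSeq ω (j : ℕ) : ℤ)) ∧
          (αSeq ω k : ℤ) * ω k = ∑ j : Fin k, β j * ω (j : ℕ)) →
        0 ≤ β ⟨0, hk1⟩) := by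
  obtain ⟨m, rfl⟩ : ∃ m, k = m + 1 := ⟨k - 1, by omega⟩
  -- uniqueness of representations (as a reusable fact)
  have huniq : ∀ β β' : Fin (m+1) → ℤ,
      ((∀ j : Fin (m+1), 1 ≤ (j : ℕ) → 0 ≤ β j ∧ β j < (αSeq ω (j : ℕ) : ℤ)) ∧
        (αSeq ω (m+1) : ℤ) * ω (m+1) = ∑ j : Fin (m+1), β j * ω (j : ℕ)) →
      ((∀ j : Fin (m+1), 1 ≤ (j : ℕ) → 0 ≤ β' j ∧ β' j < (αSeq ω (j : ℕ) : ℤ)) ∧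
        (αSeq ω (m+1) : ℤ) * ω (m+1) = ∑ j : Fin (m+1), β' j * ω (j : ℕ)) →
      β = β' := by
    intro β β' ⟨hb, hs⟩ ⟨hb', hs'⟩
    have hz := rep_zero ω hpos m (fun j => β j - β' j) ?_ ?_
    · funext j
      have h0 : β j - β' j = 0 := hz j
      omega
    · intro j hj
      have h1 := hb j hj
      have h2 := hb' j hj
      constructor <;> omega
    · have : ∑ j : Fin (m+1), (β j - β' j) * ω (j:ℕ)
          = (∑ j : Fin (m+1), β j * ω (j:ℕ)) - ∑ j : Fin (m+1), β' j * ω (j:ℕ) := by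
        rw [← Finset.sum_sub_distrib]
        exact Finset.sum_congr rfl fun j _ => by ring
      rw [this, ← hs, ← hs']
      ring
  -- existence
  have hdvd : (eSeq ω m : ℤ) ∣ (αSeq ω (m+1) : ℤ) * ω (m+1) := by
    obtain ⟨t, ht⟩ : ((eSeq ω (m+1) : ℤ)) ∣ ω (m+1) := eSeq_dvd ω (m+1) (m+1) le_rfl
    refine ⟨t, ?_⟩
    have hE : (eSeq ω m : ℤ) = (αSeq ω (m+1) : ℤ) * (eSeq ω (m+1) : ℤ) := by
      exact_mod_cast (alpha_mul ω m).symm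
    rw [ht, hE]; ring
  obtain ⟨β₀, hβ₀c, hβ₀s⟩ := exists_rep ω hpos m _ hdvd
  constructor
  · exact ⟨β₀, ⟨hβ₀c, hβ₀s⟩, fun y hy => huniq y β₀ hy ⟨hβ₀c, hβ₀s⟩⟩
  · intro hc β hβ
    obtain ⟨c, hcs⟩ := hc (m+1) (by omega) hkn
    obtain ⟨γ, hγb, hγs⟩ := nat_reduce ω hpos n hc m (by omega) c
    have hγprop : (∀ j : Fin (m+1), 1 ≤ (j : ℕ) →
          0 ≤ ((γ j : ℤ)) ∧ ((γ j : ℤ)) < (αSeq ω (j : ℕ) : ℤ)) ∧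
        (αSeq ω (m+1) : ℤ) * ω (m+1) = ∑ j : Fin (m+1), ((γ j : ℤ)) * ω (j : ℕ) := by
      refine ⟨fun j hj => ⟨Int.natCast_nonneg _, by exact_mod_cast hγb j hj⟩, ?_⟩
      rw [hcs, hγs]
    have heq : β = fun j => ((γ j : ℤ)) := huniq β (fun j => (γ j : ℤ)) hβ hγprop
    rw [heq]
    exact Int.natCast_nonneg _
end
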